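/- arXiv:1101.2679 — 2 statements merged into one kernel-verified Lean document; each statement's English description precedes it below -/
import Mathlib

section
/- Let x₀ = (a+b)/2, σ > 0, μ > 0, and set t_n = n(b−x₀)/μ for n ∈ ℕ, x₁ = x₀ + (b−x₀)/4, x₃ = x₀ + 3(b−x₀)/4, A = [x₀, x₀ + (b−x₀)/2), J = (−(b−x₀)/(4σ), (b−x₀)/(4σ)), and τ_J = inf{t > 0 : B_t ∉ J}. Let X^x denote the L^{σ,μ}-diffusion in (a,b) with jump boundary and jump distribution δ_{x₀} started at x, built from the driving Brownian motion (B_t). Then for every n ∈ ℕ: P(X^{x₁}_{t_n} ∈ A and τ_J > t_n) = P(τ_J > t_n), and P(X^{x₃}_{t_n} ∈ A and τ_J > t_n) = 0. -/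
open MeasureTheory ProbabilityTheory Set Filter

open scoped Classical in
/-- A standard one-dimensional Brownian motion started at `0`: continuous paths,
`B 0 = 0`, Gaussian increments `B t - B s ~ N(0, t-s)` and independent increments. -/
structure IsStandardBM {Ω : Type} [MeasurableSpace Ω] (P : Measure Ω) (B : ℝ → Ω → ℝ) : Prop where
  isProb : IsProbabilityMeasure P
  start : ∀ ω, B 0 ω = 0
  meas : ∀ t, Measurable (B t)
  cont : ∀ ω, Continuous fun t => B t ω
  gauss : ∀ s t : ℝ, 0 ≤ s → s ≤ t →
    P.map (fun ω => B t ω - B s ω) = gaussianReal 0 (Real.toNNReal (t - s))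
  indep : ∀ (n : ℕ) (τ : ℕ → ℝ), Monotone τ → 0 ≤ τ 0 →
    iIndepFun
      (fun i : Fin n => fun ω => B (τ (i.1 + 1)) ω - B (τ i.1) ω) P

/-- First exit time after 0 of the drifted Brownian motion `x + σ B_t + μ t` from `(c,d)`. -/
noncomputable def exitTime {Ω : Type} (c d σ μ x : ℝ) (B : ℝ → Ω → ℝ) (ω : Ω) : ℝ :=
  sInf {t : ℝ | 0 < t ∧ x + σ * B t ω + μ * t ∉ Set.Ioo c d}

/-- The successive jump times of the `L^{σ,μ}`-diffusion in `(a,b)` with jump boundary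
and jump distribution `δ_{(a+b)/2}`, started at `x` and driven by `B`. -/
noncomputable def jumpTimes {Ω : Type} (a b σ μ x : ℝ) (B : ℝ → Ω → ℝ) (ω : Ω) : ℕ → ℝ
  | 0 => sInf {t : ℝ | 0 < t ∧ x + σ * B t ω + μ * t ∉ Set.Ioo a b}
  | n + 1 =>
      sInf {t : ℝ | jumpTimes a b σ μ x B ω n < t ∧
        (a + b) / 2 + σ * (B t ω - B (jumpTimes a b σ μ x B ω n) ω) +
          μ * (t - jumpTimes a b σ μ x B ω n) ∉ Set.Ioo a b}

open scoped Classical in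
/-- The `L^{σ,μ}`-diffusion in `(a,b)` with jump boundary and jump distribution
`δ_{(a+b)/2}`, started at `x` and driven by the Brownian motion `B`. -/
noncomputable def jumpProcess {Ω : Type} (a b σ μ x : ℝ) (B : ℝ → Ω → ℝ) (t : ℝ) (ω : Ω) : ℝ :=
  (if t < jumpTimes a b σ μ x B ω 0 then x + σ * B t ω + μ * t else 0) +
  ∑' i : ℕ,
    (if jumpTimes a b σ μ x B ω i ≤ t ∧ t < jumpTimes a b σ μ x B ω (i + 1) then
      (a + b) / 2 + σ * (B t ω - B (jumpTimes a b σ μ x B ω i) ω) +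
        μ * (t - jumpTimes a b σ μ x B ω i)
    else 0)

/-- Total variation distance between two measures on `ℝ`. -/
noncomputable def tvDist (μ ν : Measure ℝ) : ℝ :=
  ⨆ s : {s : Set ℝ // MeasurableSet s}, |(μ s.1).toReal - (ν s.1).toReal|

/-- `π` is an invariant probability distribution for the jump-boundary diffusion. -/
def IsInvariantDist {Ω : Type} [MeasurableSpace Ω] (P : Measure Ω) (B : ℝ → Ω → ℝ)
    (a b σ μ : ℝ) (π : Measure ℝ) : Prop :=
  IsProbabilityMeasure π ∧ π (Set.Ioo a b)ᶜ = 0 ∧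
    ∀ t : ℝ, 0 ≤ t → ∀ A : Set ℝ, MeasurableSet A →
      ∫ x, (P {ω | jumpProcess a b σ μ x B t ω ∈ A}).toReal ∂π = (π A).toReal

set_option maxHeartbeats 1000000

namespace JPaux

/-- If `g` stays in `(a,b)` on `(s,u]` and at `u`, then the exit infimum is `> u`. -/
lemma sInf_exit_gt {a b : ℝ} (g : ℝ → ℝ) (hg : Continuous g) (s u : ℝ) (hsu : s ≤ u)
    (h1 : ∀ t, s < t → t ≤ u → g t ∈ Set.Ioo a b) (hgu : g u ∈ Set.Ioo a b)
    (hS : {t : ℝ | s < t ∧ g t ∉ Set.Ioo a b}.Nonempty) :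
    u < sInf {t : ℝ | s < t ∧ g t ∉ Set.Ioo a b} := by
  have hev : ∀ᶠ t in nhds u, g t ∈ Set.Ioo a b :=
    hg.continuousAt.eventually_mem (isOpen_Ioo.mem_nhds hgu)
  rw [Metric.eventually_nhds_iff] at hev
  obtain ⟨ε, hε, hball⟩ := hev
  have hlow : ∀ t ∈ {t : ℝ | s < t ∧ g t ∉ Set.Ioo a b}, u + ε / 2 ≤ t := by
    rintro t ⟨hst, hout⟩
    by_contra hc
    push_neg at hc
    rcases le_or_gt t u with h | h
    · exact hout (h1 t hst h)
    · refine hout (hball ?_)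
      rw [Real.dist_eq, abs_lt]
      constructor <;> [linarith; linarith]
  have := le_csInf hS hlow
  linarith

/-- Exit happens at the boundary. -/
lemma sInf_exit_hit {a b : ℝ} (g : ℝ → ℝ) (hg : Continuous g) (s : ℝ)
    (hgs : g s ∈ Set.Ioo a b)
    (hS : {t : ℝ | s < t ∧ g t ∉ Set.Ioo a b}.Nonempty) :
    s < sInf {t : ℝ | s < t ∧ g t ∉ Set.Ioo a b} ∧
      (g (sInf {t : ℝ | s < t ∧ g t ∉ Set.Ioo a b}) = a ∨
       g (sInf {t : ℝ | s < t ∧ g t ∉ Set.Ioo a b}) = b) := by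
  set S := {t : ℝ | s < t ∧ g t ∉ Set.Ioo a b} with hSdef
  have hbdd : BddBelow S := ⟨s, fun t ht => ht.1.le⟩
  set T := sInf S with hT
  have hsT : s < T := sInf_exit_gt g hg s s le_rfl (fun t h1 h2 => absurd (h1.trans_le h2) (lt_irrefl s)) hgs hS
  refine ⟨hsT, ?_⟩
  have hlower : ∀ t ∈ S, T ≤ t := fun t ht => csInf_le hbdd ht
  have hIn : ∀ t, s < t → t < T → g t ∈ Set.Ioo a b := by
    intro t h1 h2
    by_contra hout
    exact absurd (hlower t ⟨h1, hout⟩) (not_le.mpr h2)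
  have hTout : g T ∉ Set.Ioo a b := by
    intro hin
    have := sInf_exit_gt g hg s T hsT.le
      (fun t h1 h2 => by
        rcases lt_or_eq_of_le h2 with h | h
        · exact hIn t h1 h
        · rwa [h]) hin hS
    exact absurd this (lt_irrefl T)
  have hTIcc : a ≤ g T ∧ g T ≤ b := by
    constructor
    · by_contra hc
      push_neg at hc
      have hIoo : a ∈ Set.Ioo (g T) (g s) := ⟨hc, hgs.1⟩
      obtain ⟨t, ht, hgt⟩ := intermediate_value_Ioo' hsT.le hg.continuousOn hIoo
      have : t ∈ S := ⟨ht.1, by rw [hgt]; exact fun h => lt_irrefl a h.1⟩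
      exact absurd (hlower t this) (not_le.mpr ht.2)
    · by_contra hc
      push_neg at hc
      have hIoo : b ∈ Set.Ioo (g s) (g T) := ⟨hgs.2, hc⟩
      obtain ⟨t, ht, hgt⟩ := intermediate_value_Ioo hsT.le hg.continuousOn hIoo
      have : t ∈ S := ⟨ht.1, by rw [hgt]; exact fun h => lt_irrefl b h.2⟩
      exact absurd (hlower t this) (not_le.mpr ht.2)
  rcases hTIcc.1.lt_or_eq with h | h
  · rcases hTIcc.2.lt_or_eq with h' | h'
    · exact absurd ⟨h, h'⟩ hTout
    · exact Or.inr h'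
  · exact Or.inl h.symm

/-- A value that moved by at least the interval length is outside. -/
lemma out_of_Ioo {a b y e : ℝ} (hy : y ∈ Set.Ioo a b) (he : b - a ≤ |e|) :
    y + e ∉ Set.Ioo a b := by
  intro hmem
  rcases le_or_gt 0 e with h | h
  · rw [abs_of_nonneg h] at he
    have := hmem.2
    have := hy.1
    linarith
  · rw [abs_of_neg h] at he
    have := hmem.1
    have := hy.2
    linarith

/-- One step of the jump-time analysis.  `H = (b-a)/2` is the half-width,
`g` is the current excursion (`g t = y + σ (B t - B s) + μ (t - s)` in disguise:
`g t = y + σ W t + μ t - c₀` where `W` is the Brownian path and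
`c₀ = σ W s + μ s`), `tn` is the horizon. -/
lemma jump_step {a b H σ μ tn : ℝ} (W : ℝ → ℝ) (hW : Continuous W)
    (hb : b = a + 2 * H) (hH : 0 < H) (hσ : 0 < σ) (hμ : 0 < μ)
    (hconf : ∀ t, 0 < t → t ≤ tn → |σ * W t| < H / 4)
    (g : ℝ → ℝ) (hg : Continuous g) (s y c₀ : ℝ)
    (hgval : ∀ t, g t = y + σ * W t + μ * t - c₀)
    (hs : 0 ≤ s) (hy : a + H / 2 ≤ y) (hyb : y < b)
    (hBs : |σ * W s| ≤ H / 4)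
    (hiden : σ * W s + μ * s = c₀)
    (hbar : c₀ + (b - y) + H / 4 ≤ μ * tn)
    (hS : {t : ℝ | s < t ∧ g t ∉ Set.Ioo a b}.Nonempty) :
    s < sInf {t : ℝ | s < t ∧ g t ∉ Set.Ioo a b} ∧
      σ * W (sInf {t : ℝ | s < t ∧ g t ∉ Set.Ioo a b}) +
        μ * sInf {t : ℝ | s < t ∧ g t ∉ Set.Ioo a b} = c₀ + (b - y) ∧
      sInf {t : ℝ | s < t ∧ g t ∉ Set.Ioo a b} ≤ tn := by
  have hBs' := abs_le.mp hBs
  have hμs0 : 0 ≤ μ * s := mul_nonneg hμ.le hs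
  have hc₀0 : -(H/4) ≤ c₀ := by nlinarith [hBs'.1]
  have hgs : g s ∈ Set.Ioo a b := by
    rw [hgval s, show y + σ * W s + μ * s - c₀ = y by linarith]
    exact ⟨by linarith, hyb⟩
  obtain ⟨hsT, hhit⟩ := sInf_exit_hit g hg s hgs hS
  set T := sInf {t : ℝ | s < t ∧ g t ∉ Set.Ioo a b} with hTdef
  -- the upper bound time
  set tb := (c₀ + (b - y) + H / 4) / μ with htb
  have hμtb : μ * tb = c₀ + (b - y) + H / 4 := by
    rw [htb]; field_simp
  have htbpos : 0 < tb := by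
    apply div_pos _ hμ
    have : 0 < b - y := by linarith
    linarith
  have htbtn : tb ≤ tn := by
    rw [div_le_iff₀ hμ]
    linarith [hbar]
  have hWtb : |σ * W tb| < H / 4 := hconf tb htbpos htbtn
  have hWtb' := abs_lt.mp hWtb
  have hstb : s < tb := by
    have hμs : μ * s = c₀ - σ * W s := by linarith
    have : μ * s < μ * tb := by
      rw [hμs, hμtb]
      have : 0 < b - y := by linarith
      linarith [hBs'.2]
    exact lt_of_mul_lt_mul_left (by linarith) hμ.le
  have htbmem : tb ∈ {t : ℝ | s < t ∧ g t ∉ Set.Ioo a b} := by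
    refine ⟨hstb, ?_⟩
    rw [hgval tb]
    intro hmem
    have := hmem.2
    have : y + σ * W tb + μ * tb - c₀ = b + (σ * W tb + H / 4) := by
      rw [hμtb]; ring_nf
    nlinarith [hWtb'.1, hmem.2]
  have hTle : T ≤ tb := csInf_le ⟨s, fun t ht => ht.1.le⟩ htbmem
  have hTtn : T ≤ tn := hTle.trans htbtn
  have hTpos : 0 < T := lt_of_le_of_lt hs hsT
  have hWT : |σ * W T| < H / 4 := hconf T hTpos hTtn
  have hWT' := abs_lt.mp hWT
  have hμT : μ * s < μ * T := by
    exact (mul_lt_mul_iff_right₀ hμ).mpr hsT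
  rcases hhit with h | h
  · -- exit at `a` is impossible
    exfalso
    rw [hgval T] at h
    -- σ W T + μ T = c₀ + (a - y)
    have h2 : σ * W T + μ * T = c₀ + (a - y) := by linarith
    have h3 : μ * s = c₀ - σ * W s := by linarith
    nlinarith [hWT'.1, hBs'.1]
  · rw [hgval T] at h
    exact ⟨hsT, by linarith, hTtn⟩

set_option maxHeartbeats 1000000 in
lemma keyEval {Ω : Type} (B : ℝ → Ω → ℝ) (ω : Ω) (a b σ μ d : ℝ)
    (hab : a < b) (hσ : 0 < σ) (hμ : 0 < μ)
    (hcont : Continuous fun t => B t ω) (h0 : B 0 ω = 0)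
    (hd1 : (b - (a + b) / 2) / 4 ≤ d) (hd2 : d ≤ 3 * (b - (a + b) / 2) / 4)
    (n : ℕ)
    (hconf : ∀ t : ℝ, 0 < t → t ≤ (n : ℝ) * (b - (a + b) / 2) / μ →
      |σ * B t ω| < (b - (a + b) / 2) / 4)
    (hunb : ∀ s : ℝ, 0 ≤ s → ∃ t, s < t ∧
      2 * (b - (a + b) / 2) ≤ |σ * (B t ω - B s ω) + μ * (t - s)|) :
    jumpProcess a b σ μ ((a + b) / 2 + d) B ((n : ℝ) * (b - (a + b) / 2) / μ) ω
      = (a + b) / 2 + d + σ * B ((n : ℝ) * (b - (a + b) / 2) / μ) ω := by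
  set x₀ := (a + b) / 2 with hx₀def
  set H := b - x₀ with hHdef
  set tn := (n : ℝ) * H / μ with htndef
  set x := x₀ + d with hxdef
  have hH : 0 < H := by rw [hHdef, hx₀def]; linarith
  have hb2 : b = a + 2 * H := by rw [hHdef, hx₀def]; ring
  have hx₀a : x₀ = a + H := by rw [hHdef, hx₀def]; ring
  have hxa : x = a + H + d := by rw [hxdef, hx₀a]
  have hxmem : x ∈ Set.Ioo a b := ⟨by rw [hxa]; linarith, by rw [hxa, hb2]; linarith⟩
  have hx₀mem : x₀ ∈ Set.Ioo a b := ⟨by rw [hx₀a]; linarith, by rw [hx₀a, hb2]; linarith⟩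
  have hT0 : jumpTimes a b σ μ x B ω 0
      = sInf {t : ℝ | 0 < t ∧ x + σ * B t ω + μ * t ∉ Set.Ioo a b} := rfl
  have hTsucc : ∀ i : ℕ, jumpTimes a b σ μ x B ω (i + 1)
      = sInf {t : ℝ | jumpTimes a b σ μ x B ω i < t ∧
          x₀ + σ * (B t ω - B (jumpTimes a b σ μ x B ω i) ω) +
            μ * (t - jumpTimes a b σ μ x B ω i) ∉ Set.Ioo a b} := fun i => rfl
  set T := jumpTimes a b σ μ x B ω with hTdef
  -- nonemptiness of the exit sets
  have hne0 : {t : ℝ | 0 < t ∧ x + σ * B t ω + μ * t ∉ Set.Ioo a b}.Nonempty := by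
    obtain ⟨t, ht, habs⟩ := hunb 0 le_rfl
    refine ⟨t, ht, ?_⟩
    have he : x + σ * B t ω + μ * t = x + (σ * (B t ω - B 0 ω) + μ * (t - 0)) := by
      rw [h0]; ring
    rw [he]
    exact out_of_Ioo hxmem (le_trans (by rw [hb2]; ring_nf; linarith) habs)
  have hneS : ∀ i : ℕ, 0 ≤ T i →
      {t : ℝ | T i < t ∧ x₀ + σ * (B t ω - B (T i) ω) + μ * (t - T i)
        ∉ Set.Ioo a b}.Nonempty := by
    intro i hi
    obtain ⟨t, ht, habs⟩ := hunb (T i) hi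
    refine ⟨t, ht, ?_⟩
    have he : x₀ + σ * (B t ω - B (T i) ω) + μ * (t - T i)
        = x₀ + (σ * (B t ω - B (T i) ω) + μ * (t - T i)) := by ring
    rw [he]
    exact out_of_Ioo hx₀mem (le_trans (by rw [hb2]; ring_nf; linarith) habs)
  -- continuity of the excursions
  have hcontg0 : Continuous fun t : ℝ => x + σ * B t ω + μ * t :=
    (continuous_const.add (continuous_const.mul hcont)).add
      (continuous_const.mul continuous_id)
  have hcontgS : ∀ c : ℝ, Continuous fun t : ℝ =>
      x₀ + σ * (B t ω - B c ω) + μ * (t - c) := fun c =>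
    (continuous_const.add (continuous_const.mul (hcont.sub continuous_const))).add
      (continuous_const.mul (continuous_id.sub continuous_const))
  -- positivity and monotonicity of jump times
  have hmono : ∀ i : ℕ, 0 < T i ∧ T i < T (i + 1) := by
    have hg0mem : x + σ * B 0 ω + μ * 0 ∈ Set.Ioo a b := by
      rw [h0]; simpa using hxmem
    have hpos0 : 0 < T 0 :=
      (sInf_exit_hit (fun t => x + σ * B t ω + μ * t) hcontg0 0 hg0mem hne0).1
    have hstep : ∀ i : ℕ, 0 < T i → T i < T (i + 1) := by
      intro i hi
      have hgmem : x₀ + σ * (B (T i) ω - B (T i) ω) + μ * (T i - T i) ∈ Set.Ioo a b := by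
        simpa using hx₀mem
      exact (sInf_exit_hit (fun t => x₀ + σ * (B t ω - B (T i) ω) + μ * (t - T i))
        (hcontgS (T i)) (T i) hgmem (hneS i hi.le)).1
    intro i
    induction i with
    | zero => exact ⟨hpos0, hstep 0 hpos0⟩
    | succ k ih => exact ⟨lt_trans ih.1 ih.2, hstep (k + 1) (lt_trans ih.1 ih.2)⟩
  have hTpos : ∀ i, 0 < T i := fun i => (hmono i).1
  have hTsm : StrictMono T := strictMono_nat_of_lt_succ fun i => (hmono i).2
  rcases Nat.eq_zero_or_pos n with hn0 | hn
  · -- n = 0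
    subst hn0
    have htn0 : tn = 0 := by rw [htndef]; norm_num
    unfold jumpProcess
    rw [← hTdef, ← hx₀def, htn0]
    rw [if_pos (hTpos 0)]
    rw [tsum_congr (fun i =>
      if_neg (fun hc => absurd hc.1 (not_le.mpr (hTpos i)) :
        ¬ (T i ≤ (0:ℝ) ∧ (0:ℝ) < T (i + 1))))]
    rw [tsum_zero, h0, hxdef]
    ring
  · -- n ≥ 1
    obtain ⟨m, rfl⟩ : ∃ m, n = m + 1 := ⟨n - 1, (Nat.succ_pred_eq_of_pos hn).symm⟩
    have hμtn : μ * tn = ((m : ℝ) + 1) * H := by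
      rw [htndef]
      push_cast
      field_simp
    have hm0 : (0:ℝ) ≤ (m : ℝ) := Nat.cast_nonneg m
    have Qind : ∀ k : ℕ, k < m + 1 →
        σ * B (T k) ω + μ * T k = ((k : ℝ) + 1) * H - d ∧ T k ≤ tn := by
      intro k
      induction k with
      | zero =>
        intro _
        have hres := jump_step (fun t => B t ω) hcont hb2 hH hσ hμ hconf
          (fun t => x + σ * B t ω + μ * t) hcontg0 0 x 0
          (fun t => by ring)
          le_rfl (by rw [hxa]; linarith) hxmem.2
          (by show |σ * B 0 ω| ≤ H / 4; rw [h0]; simp; positivity)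
          (by show σ * B 0 ω + μ * 0 = 0; rw [h0]; ring)
          (by rw [hb2, hxa]; nlinarith [hμtn])
          hne0
        have h2 : σ * B (T 0) ω + μ * T 0 = 0 + (b - x) := hres.2.1
        have h3 : T 0 ≤ tn := hres.2.2
        refine ⟨?_, h3⟩
        rw [h2, hb2, hxa]
        push_cast
        ring
      | succ k ih =>
        intro hkn
        have hk : k < m + 1 := Nat.lt_of_succ_lt hkn
        obtain ⟨hidenk, htnk⟩ := ih hk
        have hcast : ((k : ℝ)) + 1 ≤ (m : ℝ) := by
          have h1 : k + 1 ≤ m := Nat.lt_succ_iff.mp hkn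
          have h2 := (Nat.cast_le (α := ℝ)).mpr h1
          push_cast at h2
          linarith
        have hres := jump_step (fun t => B t ω) hcont hb2 hH hσ hμ hconf
          (fun t => x₀ + σ * (B t ω - B (T k) ω) + μ * (t - T k))
          (hcontgS (T k)) (T k) x₀ (((k : ℝ) + 1) * H - d)
          (fun t => by rw [← hidenk]; ring)
          (hTpos k).le (by rw [hx₀a]; linarith) (by rw [hx₀a, hb2]; linarith)
          (hconf (T k) (hTpos k) htnk).le
          hidenk
          (by rw [hb2, hx₀a]; nlinarith [hμtn])
          (hneS k (hTpos k).le)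
        have h2 : σ * B (T (k+1)) ω + μ * T (k+1)
            = ((k : ℝ) + 1) * H - d + (b - x₀) := hres.2.1
        have h3 : T (k+1) ≤ tn := hres.2.2
        refine ⟨?_, h3⟩
        rw [h2, hb2, hx₀a]
        push_cast
        ring
    obtain ⟨idenm, hTmtn⟩ := Qind m (Nat.lt_succ_self m)
    have hWTm := abs_lt.mp (hconf (T m) (hTpos m) hTmtn)
    have hTmlt : T m < tn := by
      have h1 : μ * T m < μ * tn := by
        rw [hμtn]
        nlinarith [hWTm.1]
      exact lt_of_mul_lt_mul_left h1 hμ.le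
    -- position stays inside (a,b) on (T m, tn]
    have hIn : ∀ t, T m < t → t ≤ tn →
        x₀ + σ * (B t ω - B (T m) ω) + μ * (t - T m) ∈ Set.Ioo a b := by
      intro t h1 h2
      have hBt := abs_lt.mp (hconf t (lt_trans (hTpos m) h1) h2)
      have hμt1 : μ * t ≤ ((m : ℝ) + 1) * H := by
        rw [← hμtn]
        exact (mul_le_mul_iff_right₀ hμ).mpr h2
      have hμt2 : μ * T m < μ * t := (mul_lt_mul_iff_right₀ hμ).mpr h1
      constructor
      · rw [hx₀a]
        nlinarith [hBt.1, hWTm.2]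
      · rw [hb2, hx₀a]
        nlinarith [hBt.2, hWTm.1]
    have hgt : tn < T (m + 1) :=
      sInf_exit_gt (fun t => x₀ + σ * (B t ω - B (T m) ω) + μ * (t - T m))
        (hcontgS (T m)) (T m) tn hTmlt.le hIn (hIn tn hTmlt le_rfl)
        (hneS m (hTpos m).le)
    -- evaluate the process
    unfold jumpProcess
    rw [← hTdef, ← hx₀def]
    rw [if_neg (not_lt.mpr (le_trans (hTsm.monotone (Nat.zero_le m)) hTmlt.le))]
    have hzero : ∀ i : ℕ, i ≠ m →
        (if T i ≤ tn ∧ tn < T (i + 1) then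
          x₀ + σ * (B tn ω - B (T i) ω) + μ * (tn - T i) else 0) = 0 := by
      intro i hi
      rcases lt_or_gt_of_ne hi with h | h
      · exact if_neg (fun hc => absurd hc.2
          (not_lt.mpr (le_trans (hTsm.monotone (Nat.succ_le_of_lt h)) hTmlt.le)))
      · exact if_neg (fun hc => absurd hc.1
          (not_le.mpr (lt_of_lt_of_le hgt (hTsm.monotone (Nat.succ_le_of_lt h)))))
    rw [tsum_eq_single m hzero]
    rw [if_pos ⟨hTmlt.le, hgt⟩]
    linear_combination hμtn - idenm


lemma unb_bad_null {Ω : Type} [MeasurableSpace Ω] (P : Measure Ω) (B : ℝ → Ω → ℝ)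
    (hB : IsStandardBM P B) (σ μ C : ℝ) (hσ : 0 < σ) :
    P {ω | ¬ ∀ s : ℝ, 0 ≤ s → ∃ t, s < t ∧
        C ≤ |σ * (B t ω - B s ω) + μ * (t - s)|} = 0 := by
  have hPprob := hB.isProb
  set s0 : Set ℝ := {z : ℝ | |σ * z + μ| < 2 * C} with hs0def
  have hs0meas : MeasurableSet s0 :=
    (((measurable_id.const_mul σ).add_const μ).abs) measurableSet_Iio
  set G : ℕ → ℕ → Set Ω := fun m j =>
    (fun ω => B ((m : ℝ) + j + 1) ω - B ((m : ℝ) + j) ω) ⁻¹' s0 with hGdef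
  -- each increment has the standard Gaussian law
  have hGq : ∀ m j : ℕ, P (G m j) = gaussianReal 0 1 s0 := by
    intro m j
    have hmeas : Measurable fun ω => B ((m : ℝ) + j + 1) ω - B ((m : ℝ) + j) ω :=
      (hB.meas _).sub (hB.meas _)
    have h1 : (0:ℝ) ≤ (m : ℝ) + j := by positivity
    have hg := hB.gauss ((m : ℝ) + j) ((m : ℝ) + j + 1) h1 (by linarith)
    rw [show ((m : ℝ) + j + 1) - ((m : ℝ) + j) = 1 by ring] at hg
    calc P (G m j)
        = P.map (fun ω => B ((m : ℝ) + j + 1) ω - B ((m : ℝ) + j) ω) s0 :=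
          (Measure.map_apply hmeas hs0meas).symm
      _ = gaussianReal 0 1 s0 := by rw [hg, Real.toNNReal_one]
  -- the Gaussian measure of s0 is < 1
  have hq : gaussianReal 0 1 s0 < 1 := by
    set r : ℝ := (2 * C - μ) / σ with hrdef
    have hsub : s0 ⊆ Set.Iio r := by
      intro z hz
      have h1 : σ * z + μ < 2 * C := (abs_lt.mp hz).2
      show z < r
      rw [hrdef, lt_div_iff₀ hσ]
      linarith [mul_comm z σ]
    have hIci : 0 < gaussianReal 0 1 (Set.Ici r) := by
      rw [gaussianReal_apply 0 one_ne_zero]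
      rw [setLIntegral_pos_iff (measurable_gaussianPDF 0 1)]
      have hsupp : Function.support (gaussianPDF 0 1) = Set.univ :=
        Set.eq_univ_of_forall fun z => (gaussianPDF_pos 0 one_ne_zero z).ne'
      rw [hsupp, Set.univ_inter, Real.volume_Ici]
      exact ENNReal.zero_lt_top
    calc gaussianReal 0 1 s0 ≤ gaussianReal 0 1 (Set.Iio r) := measure_mono hsub
      _ = gaussianReal 0 1 (Set.Ici r)ᶜ := by rw [compl_Ici]
      _ = 1 - gaussianReal 0 1 (Set.Ici r) := prob_compl_eq_one_sub measurableSet_Ici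
      _ < 1 := ENNReal.sub_lt_self ENNReal.one_ne_top one_ne_zero hIci.ne'
  -- the intersection over j has measure zero
  have hBnull : ∀ m : ℕ, P (⋂ j : ℕ, G m j) = 0 := by
    intro m
    have hpow : ∀ K : ℕ, P (⋂ j : ℕ, G m j) ≤ (gaussianReal 0 1 s0) ^ K := by
      intro K
      set f : Fin K → Ω → ℝ :=
        fun i => fun ω => B ((m : ℝ) + (↑(i.1 + 1) : ℝ)) ω - B ((m : ℝ) + (i.1 : ℝ)) ω
        with hfdef
      have hτmono : Monotone fun k : ℕ => (m : ℝ) + k := fun i j hij =>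
        add_le_add_right (Nat.cast_le.mpr hij) _
      have hτ0 : (0:ℝ) ≤ (m : ℝ) + ((0 : ℕ) : ℝ) := by positivity
      have hind : iIndepFun f P :=
        hB.indep K (fun k : ℕ => (m : ℝ) + k) hτmono hτ0
      have hτ : ∀ i : Fin K, f i = fun ω => B ((m : ℝ) + i.1 + 1) ω - B ((m : ℝ) + i.1) ω := by
        intro i
        funext ω
        simp only [hfdef]
        rw [show (m : ℝ) + (↑(i.1 + 1) : ℝ) = (m : ℝ) + i.1 + 1 by push_cast; ring]
      have happ := hind.measure_inter_preimage_eq_mul Finset.univ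
        (sets := fun _ => s0) (fun i _ => hs0meas)
      have hsubset : (⋂ j : ℕ, G m j) ⊆ ⋂ i ∈ Finset.univ (α := Fin K), f i ⁻¹' s0 := by
        intro ω hω
        simp only [Set.mem_iInter] at hω ⊢
        intro i _
        rw [hτ i]
        exact hω i.1
      calc P (⋂ j : ℕ, G m j)
          ≤ P (⋂ i ∈ Finset.univ (α := Fin K), f i ⁻¹' s0) := measure_mono hsubset
        _ = ∏ i ∈ Finset.univ (α := Fin K), P (f i ⁻¹' s0) := happ
        _ = ∏ _i ∈ Finset.univ (α := Fin K), gaussianReal 0 1 s0 := by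
            apply Finset.prod_congr rfl
            intro i _
            rw [hτ i]
            exact hGq m i.1
        _ = (gaussianReal 0 1 s0) ^ K := by
            rw [Finset.prod_const, Finset.card_univ, Fintype.card_fin]
    have hto := ENNReal.tendsto_pow_atTop_nhds_zero_of_lt_one hq
    have hle : P (⋂ j : ℕ, G m j) ≤ 0 :=
      ge_of_tendsto hto (Filter.Eventually.of_forall hpow)
    exact le_antisymm hle zero_le
  -- the bad set is contained in the union
  apply measure_mono_null ?_ (measure_iUnion_null hBnull)
  intro ω hω
  simp only [Set.mem_setOf_eq] at hω
  push_neg at hω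
  obtain ⟨s, hs0', hsb⟩ := hω
  obtain ⟨m, hm⟩ := exists_nat_gt s
  refine Set.mem_iUnion.mpr ⟨m, Set.mem_iInter.mpr fun j => ?_⟩
  have hj1 : s < (m : ℝ) + j := lt_of_lt_of_le hm (le_add_of_nonneg_right (Nat.cast_nonneg j))
  have hj2 : s < (m : ℝ) + j + 1 := by linarith
  have h1 := hsb ((m : ℝ) + j) hj1
  have h2 := hsb ((m : ℝ) + j + 1) hj2
  show |σ * (B ((m : ℝ) + j + 1) ω - B ((m : ℝ) + j) ω) + μ| < 2 * C
  have hEq : σ * (B ((m : ℝ) + j + 1) ω - B ((m : ℝ) + j) ω) + μ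
      = (σ * (B ((m : ℝ) + j + 1) ω - B s ω) + μ * (((m : ℝ) + j + 1) - s))
        - (σ * (B ((m : ℝ) + j) ω - B s ω) + μ * (((m : ℝ) + j) - s)) := by ring
  rw [hEq]
  calc |_ - _| ≤ _ + _ := abs_sub _ _
    _ < 2 * C := by linarith


end JPaux

/-- With `x₀ = (a+b)/2`, `t_n = n(b-x₀)/μ`, `x₁ = x₀ + (b-x₀)/4`,
`x₃ = x₀ + 3(b-x₀)/4`, `A = [x₀, x₀+(b-x₀)/2)` and `τ_J` the exit time of the driving
Brownian motion from `J = (-(b-x₀)/(4σ), (b-x₀)/(4σ))`: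
`P(X^{x₁}_{t_n} ∈ A, τ_J > t_n) = P(τ_J > t_n)` and `P(X^{x₃}_{t_n} ∈ A, τ_J > t_n) = 0`
for every `n`. -/
theorem jump_process_on_exit_event {Ω : Type} [MeasurableSpace Ω] (P : Measure Ω)
    (B : ℝ → Ω → ℝ) (hB : IsStandardBM P B) (a b σ μ : ℝ) (hab : a < b)
    (hσ : 0 < σ) (hμ : 0 < μ) :
    ∀ n : ℕ,
      (P {ω | jumpProcess a b σ μ ((a + b) / 2 + (b - (a + b) / 2) / 4) B
            ((n : ℝ) * (b - (a + b) / 2) / μ) ω ∈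
          Set.Ico ((a + b) / 2) ((a + b) / 2 + (b - (a + b) / 2) / 2) ∧
          (n : ℝ) * (b - (a + b) / 2) / μ <
            exitTime (-((b - (a + b) / 2) / (4 * σ))) ((b - (a + b) / 2) / (4 * σ))
              1 0 0 B ω} =
        P {ω | (n : ℝ) * (b - (a + b) / 2) / μ <
            exitTime (-((b - (a + b) / 2) / (4 * σ))) ((b - (a + b) / 2) / (4 * σ))
              1 0 0 B ω}) ∧
      (P {ω | jumpProcess a b σ μ ((a + b) / 2 + 3 * (b - (a + b) / 2) / 4) B
            ((n : ℝ) * (b - (a + b) / 2) / μ) ω ∈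
          Set.Ico ((a + b) / 2) ((a + b) / 2 + (b - (a + b) / 2) / 2) ∧
          (n : ℝ) * (b - (a + b) / 2) / μ <
            exitTime (-((b - (a + b) / 2) / (4 * σ))) ((b - (a + b) / 2) / (4 * σ))
              1 0 0 B ω} = 0) := by
  intro n
  have hH : 0 < b - (a + b) / 2 := by linarith
  set Good : Set Ω := {ω | ∀ s : ℝ, 0 ≤ s → ∃ t, s < t ∧
      2 * (b - (a + b) / 2) ≤ |σ * (B t ω - B s ω) + μ * (t - s)|} with hGooddef
  have hbad : P Goodᶜ = 0 := by
    rw [hGooddef, Set.compl_setOf]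
    exact JPaux.unb_bad_null P B hB σ μ (2 * (b - (a + b) / 2)) hσ
  have hconf : ∀ ω : Ω, (n : ℝ) * (b - (a + b) / 2) / μ <
      exitTime (-((b - (a + b) / 2) / (4 * σ))) ((b - (a + b) / 2) / (4 * σ)) 1 0 0 B ω →
      ∀ t : ℝ, 0 < t → t ≤ (n : ℝ) * (b - (a + b) / 2) / μ →
      |σ * B t ω| < (b - (a + b) / 2) / 4 := by
    intro ω hω t ht0 htn
    by_contra hc
    push_neg at hc
    have hmem : t ∈ {t : ℝ | 0 < t ∧ 0 + 1 * B t ω + 0 * t ∉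
        Set.Ioo (-((b - (a + b) / 2) / (4 * σ))) ((b - (a + b) / 2) / (4 * σ))} := by
      refine ⟨ht0, fun hmem2 => ?_⟩
      rw [Set.mem_Ioo] at hmem2
      have h1 : |B t ω| < (b - (a + b) / 2) / (4 * σ) :=
        abs_lt.mpr ⟨by linarith [hmem2.1], by linarith [hmem2.2]⟩
      have h2 : |σ * B t ω| < (b - (a + b) / 2) / 4 := by
        rw [abs_mul, abs_of_pos hσ]
        calc σ * |B t ω| < σ * ((b - (a + b) / 2) / (4 * σ)) :=
              mul_lt_mul_of_pos_left h1 hσ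
          _ = (b - (a + b) / 2) / 4 := by field_simp
      exact absurd h2 (not_lt.mpr hc)
    have hle : exitTime (-((b - (a + b) / 2) / (4 * σ))) ((b - (a + b) / 2) / (4 * σ))
        1 0 0 B ω ≤ t := csInf_le ⟨0, fun u hu => hu.1.le⟩ hmem
    linarith
  have hBtn : ∀ ω : Ω, (n : ℝ) * (b - (a + b) / 2) / μ <
      exitTime (-((b - (a + b) / 2) / (4 * σ))) ((b - (a + b) / 2) / (4 * σ)) 1 0 0 B ω →
      |σ * B ((n : ℝ) * (b - (a + b) / 2) / μ) ω| < (b - (a + b) / 2) / 4 := by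
    intro ω hω
    rcases Nat.eq_zero_or_pos n with h | h
    · rw [h]
      rw [show ((0 : ℕ) : ℝ) * (b - (a + b) / 2) / μ = 0 by norm_num, hB.start ω]
      rw [mul_zero, abs_zero]
      positivity
    · refine hconf ω hω _ ?_ le_rfl
      have hn' : (1 : ℝ) ≤ (n : ℝ) := by exact_mod_cast h
      apply div_pos (mul_pos (by linarith) hH) hμ
  constructor
  · apply le_antisymm
    · exact measure_mono fun ω hω => hω.2
    · have hsub : {ω : Ω | (n : ℝ) * (b - (a + b) / 2) / μ <
          exitTime (-((b - (a + b) / 2) / (4 * σ))) ((b - (a + b) / 2) / (4 * σ))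
            1 0 0 B ω} ⊆
          {ω : Ω | jumpProcess a b σ μ ((a + b) / 2 + (b - (a + b) / 2) / 4) B
            ((n : ℝ) * (b - (a + b) / 2) / μ) ω ∈
          Set.Ico ((a + b) / 2) ((a + b) / 2 + (b - (a + b) / 2) / 2) ∧
          (n : ℝ) * (b - (a + b) / 2) / μ <
            exitTime (-((b - (a + b) / 2) / (4 * σ))) ((b - (a + b) / 2) / (4 * σ))
              1 0 0 B ω} ∪ Goodᶜ := by
        intro ω hω
        rw [Set.mem_setOf_eq] at hω
        by_cases hg : ω ∈ Good
        · left
          refine ⟨?_, hω⟩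
          have hval := JPaux.keyEval B ω a b σ μ ((b - (a + b) / 2) / 4) hab hσ hμ
            (hB.cont ω) (hB.start ω) le_rfl (by linarith) n (hconf ω hω) hg
          rw [hval]
          obtain ⟨l, r⟩ := abs_lt.mp (hBtn ω hω)
          rw [Set.mem_Ico]
          constructor <;> linarith
        · exact Or.inr hg
      calc P {ω : Ω | (n : ℝ) * (b - (a + b) / 2) / μ <
            exitTime (-((b - (a + b) / 2) / (4 * σ))) ((b - (a + b) / 2) / (4 * σ))
              1 0 0 B ω}
          ≤ P ({ω : Ω | jumpProcess a b σ μ ((a + b) / 2 + (b - (a + b) / 2) / 4) B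
            ((n : ℝ) * (b - (a + b) / 2) / μ) ω ∈
          Set.Ico ((a + b) / 2) ((a + b) / 2 + (b - (a + b) / 2) / 2) ∧
          (n : ℝ) * (b - (a + b) / 2) / μ <
            exitTime (-((b - (a + b) / 2) / (4 * σ))) ((b - (a + b) / 2) / (4 * σ))
              1 0 0 B ω} ∪ Goodᶜ) := measure_mono hsub
        _ ≤ P {ω : Ω | jumpProcess a b σ μ ((a + b) / 2 + (b - (a + b) / 2) / 4) B
            ((n : ℝ) * (b - (a + b) / 2) / μ) ω ∈
          Set.Ico ((a + b) / 2) ((a + b) / 2 + (b - (a + b) / 2) / 2) ∧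
          (n : ℝ) * (b - (a + b) / 2) / μ <
            exitTime (-((b - (a + b) / 2) / (4 * σ))) ((b - (a + b) / 2) / (4 * σ))
              1 0 0 B ω} + P Goodᶜ := measure_union_le _ _
        _ = _ := by rw [hbad, add_zero]
  · apply measure_mono_null ?_ hbad
    intro ω hω
    rw [Set.mem_setOf_eq] at hω
    intro hg
    obtain ⟨h1, h2⟩ := hω
    have hval := JPaux.keyEval B ω a b σ μ (3 * (b - (a + b) / 2) / 4) hab hσ hμ
      (hB.cont ω) (hB.start ω) (by linarith) le_rfl n (hconf ω h2) hg
    rw [hval, Set.mem_Ico] at h1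
    obtain ⟨l, r⟩ := abs_lt.mp (hBtn ω h2)
    linarith [h1.2]
end

section
/- Let a < b, x₀ = (a+b)/2, σ > 0, μ > 0, and for x ∈ (a, x₀) let x_S = x + (b−a)/2. Let X^z denote the L^{σ,μ}-diffusion in (a,b) with jump boundary and jump distribution δ_{x₀} started at z. Then for all t > 0, sup_{x∈(a,x₀)} ‖P(X^x_t ∈ ·) − P(X^{x_S}_t ∈ ·)‖_TV ≤ sup_{x∈(a,x₀)} P(τ^x > t) ≤ e^{(b−a)μ/(2σ²)} · e^{−μ²t/(2σ²)}, where τ^x = inf{t > 0 : x + μt + σB_t ∉ (a, x₀)} is the first exit time of the drifted Brownian motion from (a, x₀). -/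
open MeasureTheory ProbabilityTheory Set Filter

open Topology Real
open scoped ENNReal NNReal

namespace JumpAux

lemma sInf_eq_least {S : Set ℝ} {w : ℝ} (hw : w ∈ S) (h : ∀ u ∈ S, w ≤ u) : sInf S = w :=
  le_antisymm (csInf_le ⟨w, h⟩ hw) (le_csInf ⟨w, hw⟩ h)

lemma hitting {p : ℝ → ℝ} (hp : Continuous p) {c d s : ℝ}
    (hps : p s ∈ Set.Ioo c d)
    (hne : {u : ℝ | s < u ∧ p u ∉ Set.Ioo c d}.Nonempty) :
    s < sInf {u : ℝ | s < u ∧ p u ∉ Set.Ioo c d} ∧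
    p (sInf {u : ℝ | s < u ∧ p u ∉ Set.Ioo c d}) ∈ Set.Icc c d ∧
    p (sInf {u : ℝ | s < u ∧ p u ∉ Set.Ioo c d}) ∉ Set.Ioo c d ∧
    ∀ u, s < u → u < sInf {u : ℝ | s < u ∧ p u ∉ Set.Ioo c d} → p u ∈ Set.Ioo c d := by
  set S := {u : ℝ | s < u ∧ p u ∉ Set.Ioo c d} with hS
  have hbdd : BddBelow S := ⟨s, fun u hu => hu.1.le⟩
  set T := sInf S with hT
  have hsT : s ≤ T := le_csInf hne fun u hu => hu.1.le
  -- sequence approaching T from the right within S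
  have hseq : ∀ n : ℕ, ∃ u ∈ S, u < T + 1 / (n + 1) := by
    intro n
    exact Real.lt_sInf_add_pos hne (by positivity)
  choose u hu hult using hseq
  have hTu : ∀ n, T ≤ u n := fun n => csInf_le hbdd (hu n)
  have htend : Tendsto u atTop (𝓝 T) := by
    have h1 : Tendsto (fun n : ℕ => T + 1 / ((n : ℝ) + 1)) atTop (𝓝 (T + 0)) :=
      tendsto_const_nhds.add tendsto_one_div_add_atTop_nhds_zero_nat
    rw [add_zero] at h1
    exact tendsto_of_tendsto_of_tendsto_of_le_of_le tendsto_const_nhds h1 hTu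
      (fun n => (hult n).le)
  have hclosed : IsClosed ((Set.Ioo c d)ᶜ) := isOpen_Ioo.isClosed_compl
  have hpT : p T ∉ Set.Ioo c d := by
    have : Tendsto (fun n => p (u n)) atTop (𝓝 (p T)) := (hp.tendsto T).comp htend
    exact hclosed.mem_of_tendsto this (Filter.Eventually.of_forall fun n => (hu n).2)
  have hsT' : s < T := by
    rcases eq_or_lt_of_le hsT with h | h
    · exact absurd (h ▸ hps) hpT
    · exact h
  have hmid : ∀ u, s < u → u < T → p u ∈ Set.Ioo c d := by
    intro v hsv hvT
    by_contra hv
    exact absurd (csInf_le hbdd (show v ∈ S from ⟨hsv, hv⟩)) (not_le.mpr hvT)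
  have hIcc : p T ∈ Set.Icc c d := by
    set v : ℕ → ℝ := fun n => T - (T - s) / (n + 2) with hv
    have hvS : ∀ n, p (v n) ∈ Set.Ioo c d := by
      intro n
      apply hmid
      · have h2 : (T - s) / (n + 2) < T - s := by
          apply div_lt_self (by linarith)
          have := Nat.cast_nonneg (α := ℝ) n; linarith
        simp only [hv]; linarith
      · have : 0 < (T - s) / ((n:ℝ) + 2) := div_pos (by linarith) (by positivity)
        simp only [hv]; linarith
    have hvt : Tendsto v atTop (𝓝 T) := by
      have h0 : Tendsto (fun n : ℕ => (T - s) / ((n : ℝ) + 2)) atTop (𝓝 0) := by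
        apply Tendsto.div_atTop tendsto_const_nhds
        exact tendsto_atTop_add_const_right atTop 2 tendsto_natCast_atTop_atTop
      have := Filter.Tendsto.const_sub T h0
      rw [sub_zero] at this
      exact this
    have : Tendsto (fun n => p (v n)) atTop (𝓝 (p T)) := (hp.tendsto T).comp hvt
    exact isClosed_Icc.mem_of_tendsto this
      (Filter.Eventually.of_forall fun n => Set.Ioo_subset_Icc_self (hvS n))
  exact ⟨hsT', hIcc, hpT, hmid⟩


lemma gint {v : ℝ} (hv : 0 < v) (l : ℝ) :
    ∫ x : ℝ, Real.exp (-l * x) * ((Real.sqrt (2 * π * v))⁻¹ * Real.exp (-x^2 / (2*v)))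
      = Real.exp (l^2 * v / 2) := by
  have hs : (0:ℝ) < Real.sqrt (2 * π * v) :=
    Real.sqrt_pos.mpr (by positivity)
  have h1 : ∀ x : ℝ, Real.exp (-l * x) * ((Real.sqrt (2 * π * v))⁻¹ * Real.exp (-x^2 / (2*v)))
      = ((Real.sqrt (2 * π * v))⁻¹ * Real.exp (l^2 * v / 2)) *
        Real.exp (-(1/(2*v)) * (x + l*v)^2) := by
    intro x
    have h2 : Real.exp (-l*x) * Real.exp (-x^2/(2*v))
        = Real.exp (l^2*v/2) * Real.exp (-(1/(2*v))*(x+l*v)^2) := by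
      rw [← Real.exp_add, ← Real.exp_add]
      congr 1
      field_simp
      ring
    calc Real.exp (-l * x) * ((Real.sqrt (2 * π * v))⁻¹ * Real.exp (-x^2 / (2*v)))
        = (Real.sqrt (2 * π * v))⁻¹ * (Real.exp (-l*x) * Real.exp (-x^2/(2*v))) := by ring
      _ = (Real.sqrt (2 * π * v))⁻¹ * (Real.exp (l^2*v/2) *
            Real.exp (-(1/(2*v))*(x+l*v)^2)) := by rw [h2]
      _ = _ := by ring
  simp_rw [h1]
  rw [MeasureTheory.integral_const_mul]
  have h3 : ∫ x : ℝ, Real.exp (-(1/(2*v)) * (x + l*v)^2)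
      = ∫ x : ℝ, Real.exp (-(1/(2*v)) * x^2) :=
    integral_add_right_eq_self (fun x => Real.exp (-(1/(2*v)) * x^2)) (l*v)
  rw [h3, integral_gaussian]
  have h4 : π / (1/(2*v)) = 2*π*v := by field_simp
  rw [h4, mul_comm (Real.sqrt (2*π*v))⁻¹ _, mul_assoc, inv_mul_cancel₀ hs.ne', mul_one]


lemma gauss_tail {v : ℝ≥0} (hv : 0 < v) {r : ℝ} (hr : 0 ≤ r) :
    gaussianReal 0 v (Set.Iic (-r)) ≤ ENNReal.ofReal (Real.exp (-r^2 / (2*v))) := by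
  have hv0 : (0:ℝ) < (v:ℝ) := hv
  set l : ℝ := r / (v:ℝ) with hl
  have hl0 : 0 ≤ l := by positivity
  have hs : (0:ℝ) < Real.sqrt (2 * π * (v:ℝ)) := Real.sqrt_pos.mpr (by positivity)
  have hpdfeq : ∀ x : ℝ, gaussianPDFReal 0 v x =
      (Real.sqrt (2 * π * (v:ℝ)))⁻¹ * Real.exp (-x^2/(2*(v:ℝ))) := by
    intro x; rw [gaussianPDFReal]; norm_num
  set f : ℝ → ℝ := fun x => Real.exp (-l*(x+r)) * gaussianPDFReal 0 v x with hf
  have hfeq : f = fun x => ((Real.sqrt (2 * π * (v:ℝ)))⁻¹ * Real.exp (-l*r + l^2*(v:ℝ)/2)) *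
      Real.exp (-(1/(2*(v:ℝ)))*(x+l*(v:ℝ))^2) := by
    funext x
    show Real.exp (-l*(x+r)) * gaussianPDFReal 0 v x = _
    rw [hpdfeq]
    have harg : -l*(x+r) + -x^2/(2*(v:ℝ)) =
        (-l*r + l^2*(v:ℝ)/2) + (-(1/(2*(v:ℝ)))*(x+l*(v:ℝ))^2) := by
      field_simp
      ring
    calc Real.exp (-l*(x+r)) * ((Real.sqrt (2 * π * (v:ℝ)))⁻¹ * Real.exp (-x^2/(2*(v:ℝ))))
        = (Real.sqrt (2 * π * (v:ℝ)))⁻¹ * Real.exp (-l*(x+r) + -x^2/(2*(v:ℝ))) := by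
          rw [Real.exp_add]; ring
      _ = (Real.sqrt (2 * π * (v:ℝ)))⁻¹ * (Real.exp (-l*r + l^2*(v:ℝ)/2) *
            Real.exp (-(1/(2*(v:ℝ)))*(x+l*(v:ℝ))^2)) := by
          rw [harg, Real.exp_add]
      _ = _ := by ring
  have hint0 : Integrable (fun x : ℝ => Real.exp (-(1/(2*(v:ℝ))) * x^2)) :=
    integrable_exp_neg_mul_sq (by positivity)
  have hint1 : Integrable (fun x : ℝ => Real.exp (-(1/(2*(v:ℝ))) * (x + l*(v:ℝ))^2)) := by
    have h2 := (measurePreserving_add_right (volume : Measure ℝ)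
      (l*(v:ℝ))).integrable_comp hint0.aestronglyMeasurable
    simpa [Function.comp_def] using h2.mpr hint0
  have hint : Integrable f := by
    rw [hfeq]
    exact hint1.const_mul _
  have hnn : 0 ≤ᵐ[volume] f :=
    Filter.Eventually.of_forall fun x =>
      mul_nonneg (Real.exp_pos _).le (gaussianPDFReal_nonneg 0 v x)
  have hbound : ∀ x : ℝ, (Set.Iic (-r)).indicator (gaussianPDF 0 v) x ≤
      ENNReal.ofReal (f x) := by
    intro x
    by_cases hx : x ∈ Set.Iic (-r)
    · rw [Set.indicator_of_mem hx, gaussianPDF]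
      apply ENNReal.ofReal_le_ofReal
      show gaussianPDFReal 0 v x ≤ Real.exp (-l*(x+r)) * gaussianPDFReal 0 v x
      have h1 : (1:ℝ) ≤ Real.exp (-l*(x+r)) := by
        rw [show (1:ℝ) = Real.exp 0 from (Real.exp_zero).symm]
        apply Real.exp_le_exp.mpr
        have hxr : x + r ≤ 0 := by
          have : x ≤ -r := hx
          linarith
        nlinarith [mul_nonneg hl0 (neg_nonneg.mpr hxr)]
      nlinarith [mul_nonneg (sub_nonneg.mpr h1) (gaussianPDFReal_nonneg 0 v x)]
    · rw [Set.indicator_of_notMem hx]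
      exact zero_le
  have hval : ∫ x, f x = Real.exp (-l*r) * Real.exp (l^2*(v:ℝ)/2) := by
    have hfeq2 : f = fun x => Real.exp (-l*r) * (Real.exp (-l*x) *
        ((Real.sqrt (2 * π * (v:ℝ)))⁻¹ * Real.exp (-x^2/(2*(v:ℝ))))) := by
      funext x
      show Real.exp (-l*(x+r)) * gaussianPDFReal 0 v x = _
      rw [hpdfeq, show -l*(x+r) = -l*r + -l*x from by ring, Real.exp_add]
      ring
    rw [hfeq2, MeasureTheory.integral_const_mul, gint hv0 l]
  calc gaussianReal 0 v (Set.Iic (-r))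
      = ∫⁻ x in Set.Iic (-r), gaussianPDF 0 v x := gaussianReal_apply 0 hv.ne' _
    _ = ∫⁻ x, (Set.Iic (-r)).indicator (gaussianPDF 0 v) x :=
        (lintegral_indicator measurableSet_Iic _).symm
    _ ≤ ∫⁻ x, ENNReal.ofReal (f x) := lintegral_mono hbound
    _ = ENNReal.ofReal (∫ x, f x) := (ofReal_integral_eq_lintegral_ofReal hint hnn).symm
    _ = ENNReal.ofReal (Real.exp (-r^2 / (2*(v:ℝ)))) := by
        rw [hval, ← Real.exp_add]
        congr 1
        rw [hl]
        field_simp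
        ring
    _ ≤ _ := le_refl _


variable {Ω : Type}

def Nbad (σ μ : ℝ) (B : ℝ → Ω → ℝ) : Set Ω :=
  {ω | ∃ M : ℕ, ∀ n : ℕ, σ * B n ω + μ * n ≤ M}

lemma unbdd {σ μ : ℝ} {B : ℝ → Ω → ℝ} {ω : Ω} (hω : ω ∉ Nbad σ μ B) (M : ℝ) :
    ∃ n : ℕ, M < σ * B n ω + μ * n := by
  simp only [Nbad, Set.mem_setOf_eq, not_exists, not_forall, not_le] at hω
  obtain ⟨m, hm⟩ := exists_nat_ge M
  obtain ⟨n, hn⟩ := hω m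
  exact ⟨n, lt_of_le_of_lt hm hn⟩

lemma exists_exit {σ μ : ℝ} {B : ℝ → Ω → ℝ} {ω : Ω}
    (hcont : Continuous fun u : ℝ => B u ω)
    (hω : ω ∉ Nbad σ μ B) (s yc β : ℝ) (hs : 0 ≤ s) :
    ∃ n : ℕ, s < n ∧ β ≤ yc + (σ * B n ω + μ * n) := by
  set h : ℝ → ℝ := fun u => σ * B u ω + μ * u with hh
  have hhc : Continuous h := ((continuous_const.mul hcont).add
    (continuous_const.mul continuous_id))
  obtain ⟨K, hK⟩ : BddAbove (h '' Set.Icc 0 s) :=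
    (isCompact_Icc.image hhc).bddAbove
  obtain ⟨n, hn⟩ := unbdd hω (max K (β - yc))
  have hns : s < n := by
    by_contra hns
    push_neg at hns
    have h1 : h n ≤ K := hK (Set.mem_image_of_mem h ⟨Nat.cast_nonneg n, hns⟩)
    have h3 : h n = σ * B n ω + μ * n := rfl
    rw [h3] at h1
    have h2 : K ≤ K ⊔ (β - yc) := le_max_left _ _
    linarith [hn]
  refine ⟨n, hns, ?_⟩
  have h2 : β - yc ≤ K ⊔ (β - yc) := le_max_right _ _
  linarith [hn]



section PathWise
variable {a b σ μ : ℝ} {B : ℝ → Ω → ℝ} {ω : Ω} {y : ℝ}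

lemma times_struct (hab : a < b)
    (hcont : Continuous fun u : ℝ => B u ω) (h0 : B 0 ω = 0) (hω : ω ∉ Nbad σ μ B)
    (hy : y ∈ Set.Ioo a b) :
    (∀ n, 0 < jumpTimes a b σ μ y B ω n) ∧
    (∀ n, jumpTimes a b σ μ y B ω n < jumpTimes a b σ μ y B ω (n + 1)) ∧
    (∀ t : ℝ, ∃ n, t < jumpTimes a b σ μ y B ω n) := by
  set T := jumpTimes a b σ μ y B ω with hT
  have hx₀ : (a + b) / 2 ∈ Set.Ioo a b := ⟨by linarith, by linarith⟩
  have key : ∀ n, 0 < T n → (T n < T (n + 1) ∧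
      (a + b) / 2 + σ * (B (T (n+1)) ω - B (T n) ω) + μ * (T (n+1) - T n) ∈ Set.Icc a b ∧
      (a + b) / 2 + σ * (B (T (n+1)) ω - B (T n) ω) + μ * (T (n+1) - T n) ∉ Set.Ioo a b) := by
    intro n hn
    set p : ℝ → ℝ := fun u =>
      (a + b) / 2 + σ * (B u ω - B (T n) ω) + μ * (u - T n) with hp
    have hpc : Continuous p := by
      apply Continuous.add
      apply Continuous.add continuous_const
      exact continuous_const.mul (hcont.sub continuous_const)
      exact continuous_const.mul (continuous_id.sub continuous_const)
    have hps : p (T n) ∈ Set.Ioo a b := by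
      simp only [hp, sub_self, mul_zero, add_zero]
      exact hx₀
    have hne : {u : ℝ | T n < u ∧ p u ∉ Set.Ioo a b}.Nonempty := by
      obtain ⟨m, hm1, hm2⟩ := exists_exit hcont hω (T n)
        ((a + b) / 2 - (σ * B (T n) ω + μ * T n)) b hn.le
      refine ⟨m, hm1, fun hmem => ?_⟩
      have : p m = (a + b) / 2 - (σ * B (T n) ω + μ * T n) + (σ * B m ω + μ * m) := by
        simp only [hp]; ring
      rw [this] at hmem
      exact absurd hmem.2 (not_lt.mpr hm2)
    have hfit : T (n + 1) = sInf {u : ℝ | T n < u ∧ p u ∉ Set.Ioo a b} := by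
      simp only [hT, hp]
      rfl
    obtain ⟨h1, h2, h3, _⟩ := hitting hpc hps hne
    rw [← hfit] at h1 h2 h3
    exact ⟨h1, h2, h3⟩
  have hT0 : 0 < T 0 := by
    set p : ℝ → ℝ := fun u => y + σ * B u ω + μ * u with hp
    have hpc : Continuous p := by
      apply Continuous.add
      apply Continuous.add continuous_const (continuous_const.mul hcont)
      exact continuous_const.mul continuous_id
    have hps : p 0 ∈ Set.Ioo a b := by
      have hB0 : p 0 = y := by simp [hp, h0]
      rw [hB0]; exact hy
    have hne : {u : ℝ | 0 < u ∧ p u ∉ Set.Ioo a b}.Nonempty := by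
      obtain ⟨m, hm1, hm2⟩ := exists_exit hcont (σ := σ) (μ := μ) hω 0 y b le_rfl
      refine ⟨m, hm1, fun hmem => ?_⟩
      have : p m = y + (σ * B m ω + μ * m) := by simp only [hp]; ring
      rw [this] at hmem
      exact absurd hmem.2 (not_lt.mpr hm2)
    have hfit : T 0 = sInf {u : ℝ | 0 < u ∧ p u ∉ Set.Ioo a b} := by
      simp only [hT, hp]; rfl
    obtain ⟨h1, _, _, _⟩ := hitting hpc hps hne
    rw [← hfit] at h1
    exact h1
  have pos : ∀ n, 0 < T n := by
    intro n
    induction n with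
    | zero => exact hT0
    | succ n ih => exact ih.trans (key n ih).1
  refine ⟨pos, fun n => (key n (pos n)).1, ?_⟩
  -- unboundedness of the jump times
  intro t
  by_contra hbd
  push_neg at hbd
  have hmono : Monotone T := monotone_nat_of_le_succ fun n => (key n (pos n)).1.le
  have hbdd : BddAbove (Set.range T) := ⟨t, by rintro _ ⟨n, rfl⟩; exact hbd n⟩
  set L := ⨆ n, T n with hL
  have htendT : Tendsto T atTop (𝓝 L) := tendsto_atTop_ciSup hmono hbdd
  set h : ℝ → ℝ := fun u => σ * B u ω + μ * u with hh
  have hhc : Continuous h := ((continuous_const.mul hcont).add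
    (continuous_const.mul continuous_id))
  have h1 : Tendsto (fun n => h (T n)) atTop (𝓝 (h L)) := (hhc.tendsto L).comp htendT
  have h2 : Tendsto (fun n => h (T (n + 1))) atTop (𝓝 (h L)) :=
    h1.comp (tendsto_add_atTop_nat 1)
  have h3 : Tendsto (fun n => |h (T (n + 1)) - h (T n)|) atTop (𝓝 0) := by
    have := h2.sub h1
    rw [sub_self] at this
    have habs := (continuous_abs.tendsto 0).comp this
    rw [abs_zero] at habs
    exact habs
  have h4 : ∀ n, (b - a) / 2 ≤ |h (T (n + 1)) - h (T n)| := by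
    intro n
    obtain ⟨-, hIcc, hIoo⟩ := key n (pos n)
    set v := (a + b) / 2 + σ * (B (T (n+1)) ω - B (T n) ω) + μ * (T (n+1) - T n) with hv
    have hdiff : h (T (n + 1)) - h (T n) = v - (a + b) / 2 := by
      simp only [hh, hv]; ring
    have hva : v = a ∨ v = b := by
      rcases hIcc with ⟨hva, hvb⟩
      rcases lt_or_ge a v with h' | h'
      · rcases lt_or_ge v b with h'' | h''
        · exact absurd ⟨h', h''⟩ hIoo
        · exact Or.inr (le_antisymm hvb h'')
      · exact Or.inl (le_antisymm h' hva)
    rw [hdiff]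
    rcases hva with h' | h'
    · rw [h', abs_sub_comm, abs_of_nonneg (by linarith)]; linarith
    · rw [h', abs_of_nonneg (by linarith)]; linarith
  have : (b - a) / 2 ≤ 0 := ge_of_tendsto' h3 h4
  linarith

lemma jumpTimes_succ (x : ℝ) (n : ℕ) :
    jumpTimes a b σ μ x B ω (n + 1) = sInf {t : ℝ | jumpTimes a b σ μ x B ω n < t ∧
      (a + b) / 2 + σ * (B t ω - B (jumpTimes a b σ μ x B ω n) ω) +
        μ * (t - jumpTimes a b σ μ x B ω n) ∉ Set.Ioo a b} := rfl

lemma jumpTimes_zero (x : ℝ) :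
    jumpTimes a b σ μ x B ω 0 =
      sInf {t : ℝ | 0 < t ∧ x + σ * B t ω + μ * t ∉ Set.Ioo a b} := rfl

/-- the merging lemma: if `z`'s process jumps at time `τ ≤ t` to the midpoint, and `y`'s
(not yet jumped) path passes through the midpoint at `τ`, then the two jump processes agree
at time `t`. -/
lemma merge {y z τ t : ℝ} (hτt : τ ≤ t)
    (hz0 : jumpTimes a b σ μ z B ω 0 = τ)
    (hy : ∀ u, y + σ * B u ω + μ * u =
      (a + b) / 2 + σ * (B u ω - B τ ω) + μ * (u - τ))
    (h10 : jumpTimes a b σ μ y B ω 0 = jumpTimes a b σ μ z B ω 1)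
    (hbig : ∃ n, ∀ m, n ≤ m → t < jumpTimes a b σ μ y B ω m) :
    jumpProcess a b σ μ y B t ω = jumpProcess a b σ μ z B t ω := by
  set Ty := jumpTimes a b σ μ y B ω with hTy
  set Tz := jumpTimes a b σ μ z B ω with hTz
  have hshift : ∀ n, Ty n = Tz (n + 1) := by
    intro n
    induction n with
    | zero => exact h10
    | succ n ih =>
      show jumpTimes a b σ μ y B ω (n+1) = jumpTimes a b σ μ z B ω (n+1+1)
      rw [jumpTimes_succ, jumpTimes_succ, ← hTy, ← hTz, ih]
  set cy : ℕ → ℝ := fun i => if Ty i ≤ t ∧ t < Ty (i + 1) then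
      (a + b) / 2 + σ * (B t ω - B (Ty i) ω) + μ * (t - Ty i) else 0 with hcy
  set cz : ℕ → ℝ := fun i => if Tz i ≤ t ∧ t < Tz (i + 1) then
      (a + b) / 2 + σ * (B t ω - B (Tz i) ω) + μ * (t - Tz i) else 0 with hcz
  have hzy : ∀ i, cz (i + 1) = cy i := by
    intro i
    simp only [hcz, hcy, ← hshift]
  have hcysum : Summable cy := by
    obtain ⟨n, hn⟩ := hbig
    apply summable_of_ne_finset_zero (s := Finset.range n)
    intro m hm
    have h1 : t < Ty m := hn m (by simpa using Finset.mem_range.not.mp hm)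
    simp only [hcy, if_neg (fun hc : Ty m ≤ t ∧ _ => absurd h1 (not_lt.mpr hc.1))]
  have hczsum : Summable cz := by
    rw [← summable_nat_add_iff 1]
    simpa only [hzy] using hcysum
  have expand_y : jumpProcess a b σ μ y B t ω =
      (if t < Ty 0 then y + σ * B t ω + μ * t else 0) + ∑' i, cy i := rfl
  have expand_z : jumpProcess a b σ μ z B t ω =
      (if t < Tz 0 then z + σ * B t ω + μ * t else 0) + ∑' i, cz i := rfl
  rw [expand_y, expand_z]
  have hz0' : ¬ t < Tz 0 := by rw [hz0]; exact not_lt.mpr hτt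
  rw [if_neg hz0', hczsum.tsum_eq_zero_add]
  simp only [hzy]
  have hcz0 : cz 0 = (if t < Ty 0 then y + σ * B t ω + μ * t else 0) := by
    simp only [hcz, hz0, h10]
    by_cases hc : t < Tz 1
    · rw [if_pos ⟨hτt, hc⟩, if_pos (h10 ▸ hc), hy t]
    · rw [if_neg (fun hc' => hc hc'.2), if_neg (h10 ▸ hc)]
  rw [hcz0]
  ring

lemma coupling (hab : a < b) (hcont : Continuous fun u : ℝ => B u ω)
    (h0 : B 0 ω = 0) (hω : ω ∉ Nbad σ μ B) {x t : ℝ}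
    (hx : x ∈ Set.Ioo a ((a + b) / 2))
    (ht : exitTime a ((a + b) / 2) σ μ x B ω ≤ t) :
    jumpProcess a b σ μ x B t ω = jumpProcess a b σ μ (x + (b - a) / 2) B t ω := by
  obtain ⟨hxa, hxm⟩ := hx
  have hax₀ : a < (a + b) / 2 := by linarith
  have hx₀b : (a + b) / 2 < b := by linarith
  have hpc : Continuous fun u : ℝ => x + σ * B u ω + μ * u := by
    apply Continuous.add
    exact continuous_const.add (continuous_const.mul hcont)
    exact continuous_const.mul continuous_id
  have hps : (fun u : ℝ => x + σ * B u ω + μ * u) 0 ∈ Set.Ioo a ((a + b) / 2) := by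
    simp [h0]; exact ⟨hxa, hxm⟩
  have hne : {u : ℝ | 0 < u ∧
      (fun u : ℝ => x + σ * B u ω + μ * u) u ∉ Set.Ioo a ((a + b) / 2)}.Nonempty := by
    obtain ⟨m, hm1, hm2⟩ := exists_exit hcont (σ := σ) (μ := μ) hω 0 x ((a + b) / 2) le_rfl
    exact ⟨m, hm1, fun hmem => absurd hmem.2 (not_lt.mpr (by linarith [hm2]))⟩
  obtain ⟨hτ0, hIcc, hIoo, hmid⟩ := hitting hpc hps hne
  have hτdef : exitTime a ((a + b) / 2) σ μ x B ω =
      sInf {u : ℝ | 0 < u ∧ (fun u : ℝ => x + σ * B u ω + μ * u) u ∉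
        Set.Ioo a ((a + b) / 2)} := rfl
  set τ := exitTime a ((a + b) / 2) σ μ x B ω with hτ
  rw [← hτdef] at hτ0 hIcc hIoo hmid
  have hmid' : ∀ u, 0 < u → u < τ → x + σ * B u ω + μ * u ∈ Set.Ioo a ((a + b) / 2) :=
    fun u h1 h2 => hmid u h1 h2
  have hbig : ∀ y : ℝ, y ∈ Set.Ioo a b →
      ∃ n, ∀ m, n ≤ m → t < jumpTimes a b σ μ y B ω m := by
    intro y hy
    obtain ⟨-, hmono, hunb⟩ := times_struct hab hcont h0 hω hy
    obtain ⟨n, hn⟩ := hunb t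
    exact ⟨n, fun m hm =>
      lt_of_lt_of_le hn ((strictMono_nat_of_lt_succ hmono).monotone hm)⟩
  have hval : x + σ * B τ ω + μ * τ = a ∨ x + σ * B τ ω + μ * τ = (a + b) / 2 := by
    have h1 : x + σ * B τ ω + μ * τ ∈ Set.Icc a ((a + b) / 2) := hIcc
    have h2 : x + σ * B τ ω + μ * τ ∉ Set.Ioo a ((a + b) / 2) := hIoo
    rcases lt_or_ge a (x + σ * B τ ω + μ * τ) with h' | h'
    · rcases lt_or_ge (x + σ * B τ ω + μ * τ) ((a + b) / 2) with h'' | h''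
      · exact absurd ⟨h', h''⟩ h2
      · exact Or.inr (le_antisymm h1.2 h'')
    · exact Or.inl (le_antisymm h' h1.1)
  rcases hval with h' | h'
  · -- case: the x-path hits a at time τ; x jumps first
    have hz0 : jumpTimes a b σ μ x B ω 0 = τ := by
      rw [jumpTimes_zero]
      apply sInf_eq_least
      · exact ⟨hτ0, fun hmem => by rw [h'] at hmem; exact lt_irrefl a hmem.1⟩
      · intro u hu
        by_contra hc
        push_neg at hc
        have := hmid' u hu.1 hc
        exact hu.2 ⟨this.1, lt_trans this.2 hx₀b⟩
    have hy : ∀ u, (x + (b - a) / 2) + σ * B u ω + μ * u =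
        (a + b) / 2 + σ * (B u ω - B τ ω) + μ * (u - τ) := by
      have hxa' : x = a - σ * B τ ω - μ * τ := by linarith
      intro u; rw [hxa']; ring
    have h10 : jumpTimes a b σ μ (x + (b - a) / 2) B ω 0 = jumpTimes a b σ μ x B ω 1 := by
      rw [jumpTimes_succ, jumpTimes_zero, hz0]
      congr 1
      ext u
      simp only [Set.mem_setOf_eq, ← hy u]
      constructor
      · rintro ⟨hu0, hu2⟩
        refine ⟨?_, hu2⟩
        by_contra hc
        push_neg at hc
        rcases lt_or_eq_of_le hc with hc' | hc'
        · have := hmid' u hu0 hc'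
          exact hu2 ⟨by linarith [this.1], by linarith [this.2]⟩
        · exact hu2 ⟨by rw [hc']; linarith, by rw [hc']; linarith⟩
      · rintro ⟨hu0, hu2⟩
        exact ⟨lt_trans hτ0 hu0, hu2⟩
    exact (merge ht hz0 hy h10 (hbig _ ⟨by linarith, by linarith⟩)).symm
  · -- case: the x-path hits the midpoint at time τ; x + (b-a)/2 jumps first
    have hz0 : jumpTimes a b σ μ (x + (b - a) / 2) B ω 0 = τ := by
      rw [jumpTimes_zero]
      apply sInf_eq_least
      · refine ⟨hτ0, fun hmem => ?_⟩
        have : (x + (b - a) / 2) + σ * B τ ω + μ * τ = b := by linarith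
        rw [this] at hmem
        exact lt_irrefl b hmem.2
      · intro u hu
        by_contra hc
        push_neg at hc
        have := hmid' u hu.1 hc
        exact hu.2 ⟨by linarith [this.1], by linarith [this.2]⟩
    have hy : ∀ u, x + σ * B u ω + μ * u =
        (a + b) / 2 + σ * (B u ω - B τ ω) + μ * (u - τ) := by
      have hxa' : x = (a + b) / 2 - σ * B τ ω - μ * τ := by linarith
      intro u; rw [hxa']; ring
    have h10 : jumpTimes a b σ μ x B ω 0 = jumpTimes a b σ μ (x + (b - a) / 2) B ω 1 := by
      rw [jumpTimes_succ, jumpTimes_zero, hz0]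
      congr 1
      ext u
      simp only [Set.mem_setOf_eq, ← hy u]
      constructor
      · rintro ⟨hu0, hu2⟩
        refine ⟨?_, hu2⟩
        by_contra hc
        push_neg at hc
        rcases lt_or_eq_of_le hc with hc' | hc'
        · have := hmid' u hu0 hc'
          exact hu2 ⟨this.1, lt_trans this.2 hx₀b⟩
        · exact hu2 ⟨by rw [hc']; linarith, by rw [hc']; linarith⟩
      · rintro ⟨hu0, hu2⟩
        exact ⟨lt_trans hτ0 hu0, hu2⟩
    exact merge ht hz0 hy h10 (hbig _ ⟨hxa, by linarith⟩)


end PathWise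

section MeasSec
variable [MeasurableSpace Ω]

/-- measurable real tsum -/
lemma meas_tsum {f : ℕ → Ω → ℝ} (hf : ∀ n, Measurable (f n)) :
    Measurable fun ω => ∑' n, f n ω := by
  classical
  set S : Set Ω := {ω | Summable fun n => f n ω} with hS
  have hSmeas : MeasurableSet S := by
    have h1 : ∀ ω, (Summable fun n => f n ω) ↔
        (∑' n, (‖f n ω‖₊ : ℝ≥0∞)) ≠ ⊤ := by
      intro ω
      rw [ENNReal.tsum_coe_ne_top_iff_summable]
      constructor
      · intro h
        have := h.abs
        rw [← NNReal.summable_coe]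
        simpa [Real.norm_eq_abs] using this
      · intro h
        rw [← summable_norm_iff]
        rw [← NNReal.summable_coe] at h
        simpa using h
    have h2 : S = (fun ω => ∑' n, (‖f n ω‖₊ : ℝ≥0∞)) ⁻¹' {⊤}ᶜ := by
      ext ω; simp [hS, h1 ω]
    rw [h2]
    exact (Measurable.ennreal_tsum fun n => (hf n).nnnorm.coe_nnreal_ennreal)
      (MeasurableSet.singleton ⊤).compl
  set v : ℕ → Ω → ℝ := fun N ω => if ω ∈ S then ∑ i ∈ Finset.range N, f i ω else 0 with hv
  have hvmeas : ∀ N, Measurable (v N) := by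
    intro N
    exact Measurable.ite hSmeas (Finset.measurable_sum _ fun i _ => hf i) measurable_const
  have htend : ∀ ω, Tendsto (fun N => v N ω) atTop (𝓝 (∑' n, f n ω)) := by
    intro ω
    by_cases hω : ω ∈ S
    · simp only [hv, if_pos hω]
      exact (hω : Summable _).hasSum.tendsto_sum_nat
    · simp only [hv, if_neg hω]
      rw [tsum_eq_zero_of_not_summable hω]
      exact tendsto_const_nhds
  exact measurable_of_tendsto_metrizable hvmeas (tendsto_pi_nhds.mpr htend)



section
variable {a b σ μ : ℝ} {B : ℝ → Ω → ℝ}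

/-- measurability of hitting-type infima -/
lemma meas_sInf (hab : a < b) {g q : Ω → ℝ} (hg : Measurable g) (hq : Measurable q)
    (hBm : ∀ u : ℝ, Measurable (B u)) (hcont : ∀ ω, Continuous fun u : ℝ => B u ω)
    (hstart : ∀ ω, g ω + σ * B (q ω) ω + μ * q ω ∈ Set.Ioo a b) :
    Measurable fun ω => sInf {u : ℝ | q ω < u ∧ g ω + σ * B u ω + μ * u ∉ Set.Ioo a b} := by
  classical
  set C : Set ℝ := (Set.Ioo a b)ᶜ with hC
  have hCcl : IsClosed C := isOpen_Ioo.isClosed_compl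
  have hCne : C.Nonempty := ⟨a, by simp [hC]⟩
  set F : Ω → ℝ → ℝ := fun ω u => g ω + σ * B u ω + μ * u with hF
  have hFc : ∀ ω, Continuous (F ω) := by
    intro ω
    apply Continuous.add
    exact continuous_const.add (continuous_const.mul (hcont ω))
    exact continuous_const.mul continuous_id
  set J : Ω → ℝ → ℝ≥0∞ := fun ω β =>
    ⨅ r : ℚ, if q ω < (r : ℝ) ∧ (r : ℝ) < β then
      ENNReal.ofReal (Metric.infDist (F ω r) C) else 1 with hJ
  -- characterization of J = 0
  have claimJ : ∀ ω (β : ℝ), J ω β = 0 ↔ ∃ u, q ω < u ∧ u ≤ β ∧ F ω u ∈ C := by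
    intro ω β
    constructor
    · intro h0
      have hex : ∀ k : ℕ, ∃ r : ℚ, (q ω < (r:ℝ) ∧ (r:ℝ) < β) ∧
          Metric.infDist (F ω r) C < 1 / (k + 1) := by
        intro k
        have hlt : J ω β < ENNReal.ofReal (1 / (k + 1)) := by
          rw [h0]; exact ENNReal.ofReal_pos.mpr (by positivity)
        have hle1 : ENNReal.ofReal (1 / ((k:ℝ) + 1)) ≤ 1 := by
          rw [← ENNReal.ofReal_one]
          apply ENNReal.ofReal_le_ofReal
          rw [div_le_one (by positivity)]
          linarith [Nat.cast_nonneg (α := ℝ) k]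
        rw [hJ] at hlt
        obtain ⟨r, hr⟩ := iInf_lt_iff.mp hlt
        by_cases hcond : q ω < (r:ℝ) ∧ (r:ℝ) < β
        · rw [if_pos hcond] at hr
          exact ⟨r, hcond, (ENNReal.ofReal_lt_ofReal_iff (by positivity)).mp hr⟩
        · rw [if_neg hcond] at hr
          exact absurd hr (not_lt.mpr hle1)
      choose r hr1 hr2 using hex
      have hrIcc : ∀ k, (r k : ℝ) ∈ Set.Icc (q ω) β :=
        fun k => ⟨(hr1 k).1.le, (hr1 k).2.le⟩
      obtain ⟨u, humem, φ, hφ, hconv⟩ := isCompact_Icc.tendsto_subseq hrIcc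
      have hd1 : Tendsto (fun k => Metric.infDist (F ω (r (φ k))) C) atTop
          (𝓝 (Metric.infDist (F ω u) C)) :=
        (((Metric.continuous_infDist_pt C).comp (hFc ω)).tendsto u).comp hconv
      have hd2 : Tendsto (fun k => Metric.infDist (F ω (r (φ k))) C) atTop (𝓝 0) := by
        apply tendsto_of_tendsto_of_tendsto_of_le_of_le tendsto_const_nhds
          tendsto_one_div_add_atTop_nhds_zero_nat
          (fun k => Metric.infDist_nonneg)
        intro k
        refine le_trans (hr2 (φ k)).le ?_
        apply div_le_div_of_nonneg_left (by norm_num) (by positivity)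
        have hk : k ≤ φ k := hφ.le_apply
        exact_mod_cast Nat.succ_le_succ hk
      have hzero : Metric.infDist (F ω u) C = 0 := tendsto_nhds_unique hd1 hd2
      have huC : F ω u ∈ C := ((hCcl.mem_iff_infDist_zero hCne).mpr hzero)
      have hqu : q ω < u := by
        rcases lt_or_eq_of_le humem.1 with h | h
        · exact h
        · exfalso
          have : F ω (q ω) ∈ Set.Ioo a b := hstart ω
          rw [← h] at huC
          exact (Set.mem_compl_iff _ _).mp huC this
      exact ⟨u, hqu, humem.2, huC⟩
    · rintro ⟨u, hqu, huβ, huC⟩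
      refine le_antisymm ?_ zero_le
      have hrk : ∀ k : ℕ, ∃ r : ℚ, max (q ω) (u - 1 / (k + 1)) < r ∧ (r:ℝ) < u := by
        intro k
        apply exists_rat_btwn
        apply max_lt hqu
        have : 0 < 1 / ((k:ℝ) + 1) := by positivity
        linarith
      choose r hrl hru using hrk
      have hconv : Tendsto (fun k => (r k : ℝ)) atTop (𝓝 u) := by
        refine tendsto_of_tendsto_of_tendsto_of_le_of_le
          (g := fun k : ℕ => u - 1 / ((k:ℝ)+1)) (h := fun _ : ℕ => u)
          ?_ tendsto_const_nhds ?_ ?_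
        · have := tendsto_one_div_add_atTop_nhds_zero_nat.const_sub (b := u)
          simpa using this
        · exact fun k => (le_max_right _ _).trans (hrl k).le
        · exact fun k => (hru k).le
      have hdist : Tendsto (fun k => ENNReal.ofReal (Metric.infDist (F ω (r k)) C))
          atTop (𝓝 0) := by
        have h1 : Tendsto (fun k => Metric.infDist (F ω (r k)) C) atTop
            (𝓝 (Metric.infDist (F ω u) C)) :=
          (((Metric.continuous_infDist_pt C).comp (hFc ω)).tendsto u).comp hconv
        rw [(hCcl.mem_iff_infDist_zero hCne).mp huC] at h1
        have := (ENNReal.continuous_ofReal.tendsto 0).comp h1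
        simpa [Function.comp_def] using this
      apply ge_of_tendsto' hdist
      intro k
      have hcond : q ω < (r k : ℝ) ∧ (r k : ℝ) < β :=
        ⟨(le_max_left _ _).trans_lt (hrl k), lt_of_lt_of_le (hru k) huβ⟩
      calc J ω β ≤ if q ω < ((r k : ℚ) : ℝ) ∧ ((r k : ℚ) : ℝ) < β then
            ENNReal.ofReal (Metric.infDist (F ω (r k)) C) else 1 := iInf_le _ _
        _ = ENNReal.ofReal (Metric.infDist (F ω (r k)) C) := if_pos hcond
  -- A = the exit set
  set A : Ω → Set ℝ := fun ω => {u : ℝ | q ω < u ∧ g ω + σ * B u ω + μ * u ∉ Set.Ioo a b}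
    with hA
  have hmemA : ∀ ω u, u ∈ A ω ↔ (q ω < u ∧ F ω u ∈ C) := by
    intro ω u; simp [hA, hF, hC, Set.mem_compl_iff]
  have claimNE : ∀ ω, (A ω).Nonempty ↔ ∃ m : ℕ, J ω (q ω + m + 1) = 0 := by
    intro ω
    constructor
    · rintro ⟨u, hu⟩
      rw [hmemA] at hu
      obtain ⟨m, hm⟩ := exists_nat_ge (u - q ω)
      refine ⟨m, (claimJ ω _).mpr ⟨u, hu.1, by linarith, hu.2⟩⟩
    · rintro ⟨m, hm⟩
      obtain ⟨u, h1, -, h3⟩ := (claimJ ω _).mp hm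
      exact ⟨u, (hmemA ω u).mpr ⟨h1, h3⟩⟩
  -- measurability of ω ↦ J ω (β ω)
  have Jmeas : ∀ β : Ω → ℝ, Measurable β → Measurable fun ω => J ω (β ω) := by
    intro β hβ
    apply Measurable.iInf
    intro r
    apply Measurable.ite
    · exact (measurableSet_lt hq measurable_const).inter
        (measurableSet_lt measurable_const hβ)
    · apply ENNReal.measurable_ofReal.comp
      apply (Metric.continuous_infDist_pt C).measurable.comp
      exact (hg.add (measurable_const.mul (hBm r))).add measurable_const
    · exact measurable_const
  -- now prove measurability via sublevel sets
  apply measurable_of_Iic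
  intro c
  have hpre : (fun ω => sInf (A ω)) ⁻¹' Set.Iic c =
      {ω | ∀ k : ℕ, J ω (c + 1 / (k + 1)) = 0} ∪
      ({ω | ∀ m : ℕ, J ω (q ω + m + 1) ≠ 0} ∩ {ω | (0:ℝ) ≤ c}) := by
    ext ω
    simp only [Set.mem_preimage, Set.mem_Iic, Set.mem_union, Set.mem_inter_iff,
      Set.mem_setOf_eq]
    constructor
    · intro h
      by_cases hAne : (A ω).Nonempty
      · left
        intro k
        apply (claimJ ω _).mpr
        obtain ⟨u, huA, hult⟩ := Real.lt_sInf_add_pos hAne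
          (show (0:ℝ) < 1 / (k+1) by positivity)
        rw [hmemA] at huA
        exact ⟨u, huA.1, by linarith, huA.2⟩
      · right
        constructor
        · intro m hm
          exact hAne ((claimNE ω).mpr ⟨m, hm⟩)
        · rw [Set.not_nonempty_iff_eq_empty.mp hAne, Real.sInf_empty] at h
          exact h
    · rintro (h | ⟨h1, h2⟩)
      · have hbdd : BddBelow (A ω) := ⟨q ω, fun u hu => hu.1.le⟩
        by_contra hc
        push_neg at hc
        obtain ⟨k, hk⟩ := exists_nat_one_div_lt (show (0:ℝ) < sInf (A ω) - c by linarith)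
        obtain ⟨u, hu1, hu2, hu3⟩ := (claimJ ω _).mp (h k)
        have huA : u ∈ A ω := (hmemA ω u).mpr ⟨hu1, hu3⟩
        have : sInf (A ω) ≤ u := csInf_le hbdd huA
        have hkk : 1 / ((k:ℝ) + 1) < sInf (A ω) - c := hk
        linarith
      · have hAe : A ω = ∅ := by
          rw [← Set.not_nonempty_iff_eq_empty]
          intro hne
          obtain ⟨m, hm⟩ := (claimNE ω).mp hne
          exact h1 m hm
        rw [hAe, Real.sInf_empty]
        exact h2
  show MeasurableSet ((fun ω => sInf (A ω)) ⁻¹' Set.Iic c)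
  rw [hpre]
  apply MeasurableSet.union
  · rw [Set.setOf_forall]
    exact MeasurableSet.iInter fun k =>
      (Jmeas _ measurable_const) (MeasurableSet.singleton 0)
  · apply MeasurableSet.inter
    · rw [Set.setOf_forall]
      refine MeasurableSet.iInter fun m => ?_
      have hset : {x | J x (q x + m + 1) ≠ 0} =
          (fun x => J x (q x + (m:ℝ) + 1)) ⁻¹' {0}ᶜ := by
        ext x; simp
      rw [hset]
      exact (Jmeas (fun x => q x + (m:ℝ) + 1) ((hq.add_const _).add_const _))
        (MeasurableSet.singleton 0).compl
    · by_cases h0c : (0:ℝ) ≤ c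
      · simp only [h0c, Set.setOf_true]; exact MeasurableSet.univ
      · simp only [h0c, Set.setOf_false]; exact MeasurableSet.empty

lemma jumpTimes_succ' {ω : Ω} (x : ℝ) (n : ℕ) :
    jumpTimes a b σ μ x B ω (n + 1) = sInf {t : ℝ | jumpTimes a b σ μ x B ω n < t ∧
      (a + b) / 2 + σ * (B t ω - B (jumpTimes a b σ μ x B ω n) ω) +
        μ * (t - jumpTimes a b σ μ x B ω n) ∉ Set.Ioo a b} := rfl

lemma jumpTimes_measurable (hab : a < b) {x : ℝ} (hx : x ∈ Set.Ioo a b)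
    (hBm : ∀ u : ℝ, Measurable (B u)) (hcont : ∀ ω, Continuous fun u : ℝ => B u ω)
    (h0 : ∀ ω, B 0 ω = 0) :
    ∀ n, Measurable fun ω => jumpTimes a b σ μ x B ω n := by
  have hBj : Measurable (Function.uncurry B) :=
    measurable_uncurry_of_continuous_of_measurable hcont hBm
  intro n
  induction n with
  | zero =>
    have h1 : (fun ω => jumpTimes a b σ μ x B ω 0) = fun ω =>
        sInf {u : ℝ | (fun _ : Ω => (0:ℝ)) ω < u ∧
          (fun _ : Ω => x) ω + σ * B u ω + μ * u ∉ Set.Ioo a b} := rfl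
    rw [h1]
    apply meas_sInf hab measurable_const measurable_const hBm hcont
    intro ω
    simpa [h0 ω] using hx
  | succ n ih =>
    have hTg : Measurable fun ω => B (jumpTimes a b σ μ x B ω n) ω :=
      hBj.comp (ih.prodMk measurable_id)
    have hgm : Measurable fun ω => (a + b) / 2 -
        (σ * B (jumpTimes a b σ μ x B ω n) ω + μ * jumpTimes a b σ μ x B ω n) :=
      measurable_const.sub ((measurable_const.mul hTg).add (measurable_const.mul ih))
    have h1 : (fun ω => jumpTimes a b σ μ x B ω (n+1)) = fun ω =>
        sInf {u : ℝ | jumpTimes a b σ μ x B ω n < u ∧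
          ((a + b) / 2 - (σ * B (jumpTimes a b σ μ x B ω n) ω +
            μ * jumpTimes a b σ μ x B ω n)) + σ * B u ω + μ * u ∉ Set.Ioo a b} := by
      funext ω
      rw [jumpTimes_succ']
      congr 1
      ext u
      simp only [Set.mem_setOf_eq]
      have heq : (a + b) / 2 + σ * (B u ω - B (jumpTimes a b σ μ x B ω n) ω) +
          μ * (u - jumpTimes a b σ μ x B ω n)
          = ((a + b) / 2 - (σ * B (jumpTimes a b σ μ x B ω n) ω +
            μ * jumpTimes a b σ μ x B ω n)) + σ * B u ω + μ * u := by ring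
      rw [heq]
    rw [h1]
    apply meas_sInf hab hgm ih hBm hcont
    intro ω
    have heq : ((a + b) / 2 - (σ * B (jumpTimes a b σ μ x B ω n) ω +
        μ * jumpTimes a b σ μ x B ω n)) + σ * B (jumpTimes a b σ μ x B ω n) ω +
        μ * jumpTimes a b σ μ x B ω n = (a + b) / 2 := by ring
    rw [heq]
    exact ⟨by linarith, by linarith⟩

lemma jumpProcess_measurable (hab : a < b) {x : ℝ} (hx : x ∈ Set.Ioo a b) (t : ℝ)
    (hBm : ∀ u : ℝ, Measurable (B u)) (hcont : ∀ ω, Continuous fun u : ℝ => B u ω)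
    (h0 : ∀ ω, B 0 ω = 0) :
    Measurable fun ω => jumpProcess a b σ μ x B t ω := by
  classical
  have hT := jumpTimes_measurable (σ := σ) (μ := μ) hab hx hBm hcont h0
  have hBj : Measurable (Function.uncurry B) :=
    measurable_uncurry_of_continuous_of_measurable hcont hBm
  apply Measurable.add
  · apply Measurable.ite
    · exact measurableSet_lt measurable_const (hT 0)
    · exact (measurable_const.add (measurable_const.mul (hBm t))).add measurable_const
    · exact measurable_const
  · apply meas_tsum
    intro i
    apply Measurable.ite
    · exact (measurableSet_le (hT i) measurable_const).inter
        (measurableSet_lt measurable_const (hT (i+1)))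
    · have hTg : Measurable fun ω => B (jumpTimes a b σ μ x B ω i) ω :=
        hBj.comp ((hT i).prodMk measurable_id)
      exact (measurable_const.add (measurable_const.mul ((hBm t).sub hTg))).add
        (measurable_const.mul (measurable_const.sub (hT i)))
    · exact measurable_const


end

lemma Nbad_null {P : Measure Ω} [IsProbabilityMeasure P]
    {B : ℝ → Ω → ℝ} {σ μ : ℝ} (hσ : 0 < σ) (hμ : 0 < μ)
    (hmeas : ∀ t, Measurable (B t)) (h0 : ∀ ω, B 0 ω = 0)
    (hgauss : ∀ s t : ℝ, 0 ≤ s → s ≤ t →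
      P.map (fun ω => B t ω - B s ω) = gaussianReal 0 (Real.toNNReal (t - s))) :
    P (Nbad σ μ B) = 0 := by
  have hmap : ∀ n : ℕ, P.map (B n) = gaussianReal 0 (Real.toNNReal n) := by
    intro n
    have := hgauss 0 n le_rfl (Nat.cast_nonneg n)
    simpa [h0] using this
  have key : ∀ M : ℕ, P {ω | ∀ n : ℕ, σ * B n ω + μ * n ≤ M} = 0 := by
    intro M
    set c : ℝ := Real.exp (-(μ^2/(8*σ^2))) with hc
    have hc1 : c < 1 := by
      rw [hc, Real.exp_lt_one_iff]
      have : 0 < μ^2/(8*σ^2) := by positivity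
      linarith
    have hc0 : (0:ℝ) ≤ c := (Real.exp_pos _).le
    obtain ⟨n₀, hn₀⟩ := exists_nat_ge (max 1 (2*M/μ))
    have hbound : ∀ n : ℕ, n₀ ≤ n →
        P {ω | ∀ k : ℕ, σ * B k ω + μ * k ≤ M} ≤ ENNReal.ofReal (c^n) := by
      intro n hn
      have hn1 : (1:ℝ) ≤ n := by
        have h1 : (1:ℝ) ≤ max 1 (2*M/μ) := le_max_left _ _
        have h2 : (n₀:ℝ) ≤ n := Nat.cast_le.mpr hn
        linarith [hn₀]
      have hn0 : (0:ℝ) < n := by linarith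
      have hμn : 2*(M:ℝ) ≤ μ * n := by
        have h1 : 2*(M:ℝ)/μ ≤ max 1 (2*M/μ) := le_max_right _ _
        have h2 : (n₀:ℝ) ≤ n := Nat.cast_le.mpr hn
        have h3 : 2*(M:ℝ)/μ ≤ n := by linarith [hn₀]
        calc 2*(M:ℝ) = (2*M/μ) * μ := by field_simp
          _ ≤ n * μ := by apply mul_le_mul_of_nonneg_right h3 hμ.le
          _ = μ * n := by ring
      set r : ℝ := (μ*n - M)/σ with hr
      have hr0 : 0 ≤ r := by
        apply div_nonneg _ hσ.le
        have : (0:ℝ) ≤ M := Nat.cast_nonneg M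
        linarith
      have hsub : {ω | ∀ k : ℕ, σ * B k ω + μ * k ≤ M} ⊆ B n ⁻¹' (Set.Iic (-r)) := by
        intro ω hω
        have h1 := hω n
        simp only [Set.mem_preimage, Set.mem_Iic]
        have h2 : B n ω ≤ ((M:ℝ) - μ*n)/σ := by
          rw [le_div_iff₀ hσ]
          linarith [h1]
        have h3 : ((M:ℝ) - μ*n)/σ = -r := by rw [hr]; ring
        linarith [h2, h3.le]
      have hvpos : 0 < Real.toNNReal n := Real.toNNReal_pos.mpr hn0
      have hvcoe : ((Real.toNNReal (n:ℝ)) : ℝ) = (n:ℝ) := Real.coe_toNNReal _ hn0.le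
      calc P {ω | ∀ k : ℕ, σ * B k ω + μ * k ≤ M}
          ≤ P (B n ⁻¹' (Set.Iic (-r))) := measure_mono hsub
        _ = P.map (B n) (Set.Iic (-r)) := (Measure.map_apply (hmeas n) measurableSet_Iic).symm
        _ = gaussianReal 0 (Real.toNNReal n) (Set.Iic (-r)) := by rw [hmap n]
        _ ≤ ENNReal.ofReal (Real.exp (-r^2 / (2*((Real.toNNReal (n:ℝ)) : ℝ)))) :=
            gauss_tail hvpos hr0
        _ ≤ ENNReal.ofReal (c^n) := by
            apply ENNReal.ofReal_le_ofReal
            rw [hvcoe, hc, ← Real.exp_nat_mul]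
            apply Real.exp_le_exp.mpr
            have h3 : (μ*(n:ℝ)/2)^2 ≤ (μ*n - M)^2 := by
              apply pow_le_pow_left₀ (by positivity) (by linarith) 2
            have hσ2 : (0:ℝ) < σ^2 := by positivity
            calc -r^2/(2*(n:ℝ)) = -((μ*n-M)^2)/(σ^2*(2*n)) := by
                  rw [hr, div_pow]; ring
              _ ≤ -((μ*(n:ℝ)/2)^2)/(σ^2*(2*n)) := by
                  rw [neg_div, neg_div, neg_le_neg_iff]
                  gcongr
              _ = (n:ℕ) * -(μ^2/(8*σ^2)) := by
                  field_simp
                  ring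
    have htend : Tendsto (fun n : ℕ => ENNReal.ofReal (c^n)) atTop (𝓝 0) := by
      have h1 : Tendsto (fun n : ℕ => c^n) atTop (𝓝 0) :=
        tendsto_pow_atTop_nhds_zero_of_lt_one hc0 hc1
      have h2 := (ENNReal.continuous_ofReal.tendsto 0).comp h1
      simpa [Function.comp_def] using h2
    have hle := ge_of_tendsto htend (eventually_atTop.mpr ⟨n₀, hbound⟩)
    exact le_zero_iff.mp hle
  have hcover : Nbad σ μ B = ⋃ M : ℕ, {ω | ∀ n : ℕ, σ * B n ω + μ * n ≤ M} := by
    ext ω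
    simp [Nbad, Set.mem_iUnion]
  rw [hcover]
  exact measure_iUnion_null key

end MeasSec
end JumpAux

/-- For `x ∈ (a,x₀)` and its shift `x_S = x + (b-a)/2`, the laws of the
jump-boundary diffusions started at `x` and `x_S` satisfy
`sup_x ‖P(X^x_t ∈ ·) - P(X^{x_S}_t ∈ ·)‖_TV ≤ sup_x P(τ^x > t)
  ≤ e^{(b-a)μ/(2σ²)} e^{-μ²t/(2σ²)}`,
where `τ^x` is the exit time of the drifted Brownian motion from `(a, x₀)`. -/
theorem shifted_coupling_tv_bound {Ω : Type} [MeasurableSpace Ω] (P : Measure Ω)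
    (B : ℝ → Ω → ℝ) (hB : IsStandardBM P B) (a b σ μ : ℝ) (hab : a < b)
    (hσ : 0 < σ) (hμ : 0 < μ) :
    ∀ t : ℝ, 0 < t →
      (⨆ x : Set.Ioo a ((a + b) / 2),
          tvDist (P.map (jumpProcess a b σ μ (x : ℝ) B t))
            (P.map (jumpProcess a b σ μ ((x : ℝ) + (b - a) / 2) B t))) ≤
        (⨆ x : Set.Ioo a ((a + b) / 2),
          (P {ω | t < exitTime a ((a + b) / 2) σ μ (x : ℝ) B ω}).toReal) ∧
      (⨆ x : Set.Ioo a ((a + b) / 2),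
          (P {ω | t < exitTime a ((a + b) / 2) σ μ (x : ℝ) B ω}).toReal) ≤
        Real.exp ((b - a) * μ / (2 * σ ^ 2)) * Real.exp (-(μ ^ 2 * t) / (2 * σ ^ 2)) := by
  intro t ht
  haveI : IsProbabilityMeasure P := hB.isProb
  have hax₀ : a < (a + b) / 2 := by linarith
  have hx₀b : (a + b) / 2 < b := by linarith
  haveI hnex : Nonempty ↥(Set.Ioo a ((a + b) / 2)) :=
    (Set.nonempty_Ioo.mpr hax₀).to_subtype
  have hNnull : P (JumpAux.Nbad σ μ B) = 0 :=
    JumpAux.Nbad_null hσ hμ hB.meas hB.start hB.gauss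
  -- the per-starting-point Gaussian tail bound
  have tail : ∀ x : ℝ, x ∈ Set.Ioo a ((a + b) / 2) →
      (P {ω | t < exitTime a ((a + b) / 2) σ μ x B ω}).toReal ≤
        Real.exp ((b - a) * μ / (2 * σ ^ 2)) * Real.exp (-(μ ^ 2 * t) / (2 * σ ^ 2)) := by
    intro x hx
    apply ENNReal.toReal_le_of_le_ofReal (by positivity)
    have hsub : {ω | t < exitTime a ((a + b) / 2) σ μ x B ω} ⊆
        B t ⁻¹' (Set.Iic (((b - a) / 2 - μ * t) / σ)) := by
      intro ω hω
      simp only [Set.mem_setOf_eq] at hω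
      have hbd : BddBelow {u : ℝ | 0 < u ∧ x + σ * B u ω + μ * u ∉ Set.Ioo a ((a+b)/2)} :=
        ⟨0, fun u hu => hu.1.le⟩
      have htS : t ∉ {u : ℝ | 0 < u ∧ x + σ * B u ω + μ * u ∉ Set.Ioo a ((a+b)/2)} :=
        fun hin => absurd (csInf_le hbd hin) (not_le.mpr hω)
      simp only [Set.mem_setOf_eq, not_and, not_not] at htS
      have hin : x + σ * B t ω + μ * t ∈ Set.Ioo a ((a+b)/2) := htS ht
      simp only [Set.mem_preimage, Set.mem_Iic]
      rw [le_div_iff₀ hσ]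
      have hcomm : B t ω * σ = σ * B t ω := mul_comm _ _
      have h2 := hin.2
      have h1 := hx.1
      linarith
    have hmapt : P.map (B t) = gaussianReal 0 (Real.toNNReal t) := by
      have := hB.gauss 0 t le_rfl ht.le
      simpa [hB.start] using this
    have hchain : P {ω | t < exitTime a ((a + b) / 2) σ μ x B ω} ≤
        gaussianReal 0 (Real.toNNReal t) (Set.Iic (((b - a) / 2 - μ * t) / σ)) := by
      calc P {ω | t < exitTime a ((a + b) / 2) σ μ x B ω}
          ≤ P (B t ⁻¹' (Set.Iic (((b - a) / 2 - μ * t) / σ))) := measure_mono hsub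
        _ = P.map (B t) (Set.Iic (((b - a) / 2 - μ * t) / σ)) :=
            (Measure.map_apply (hB.meas t) measurableSet_Iic).symm
        _ = _ := by rw [hmapt]
    by_cases hcase : μ * t ≤ (b - a) / 2
    · refine le_trans hchain ?_
      calc gaussianReal 0 (Real.toNNReal t) (Set.Iic (((b - a) / 2 - μ * t) / σ))
          ≤ 1 := prob_le_one
        _ ≤ ENNReal.ofReal (Real.exp ((b - a) * μ / (2 * σ ^ 2)) *
              Real.exp (-(μ ^ 2 * t) / (2 * σ ^ 2))) := by
            rw [← ENNReal.ofReal_one]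
            apply ENNReal.ofReal_le_ofReal
            rw [← Real.exp_add]
            have h0' : (0:ℝ) ≤ (b - a) * μ / (2 * σ ^ 2) + -(μ ^ 2 * t) / (2 * σ ^ 2) := by
              rw [← add_div]
              apply div_nonneg _ (by positivity)
              nlinarith
            exact Real.one_le_exp h0'
    · push_neg at hcase
      have hr0 : 0 ≤ (μ * t - (b - a) / 2) / σ := div_nonneg (by linarith) hσ.le
      have hIic : Set.Iic (((b - a) / 2 - μ * t) / σ) =
          Set.Iic (-((μ * t - (b - a) / 2) / σ)) := by congr 1; ring
      have hvpos : 0 < Real.toNNReal t := Real.toNNReal_pos.mpr ht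
      have hvcoe : ((Real.toNNReal t : ℝ≥0) : ℝ) = t := Real.coe_toNNReal _ ht.le
      refine le_trans hchain ?_
      rw [hIic]
      refine le_trans (JumpAux.gauss_tail hvpos hr0) ?_
      apply ENNReal.ofReal_le_ofReal
      rw [hvcoe, ← Real.exp_add]
      apply Real.exp_le_exp.mpr
      have hσ2 : (0:ℝ) < σ^2 := by positivity
      calc -((μ * t - (b - a) / 2) / σ) ^ 2 / (2 * t)
          = -((μ * t - (b - a) / 2) ^ 2) / (σ ^ 2 * (2 * t)) := by
            rw [div_pow]; ring
        _ ≤ ((b - a) * μ * t - μ ^ 2 * t ^ 2) / (σ ^ 2 * (2 * t)) := by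
            apply div_le_div_of_nonneg_right ?_ (by positivity)
            nlinarith [sq_nonneg ((b-a)/2)]
        _ = (b - a) * μ / (2 * σ ^ 2) + -(μ ^ 2 * t) / (2 * σ ^ 2) := by
            field_simp
            ring
  have hbddR : BddAbove (Set.range fun x : ↥(Set.Ioo a ((a+b)/2)) =>
      (P {ω | t < exitTime a ((a + b) / 2) σ μ (x:ℝ) B ω}).toReal) := by
    refine ⟨1, ?_⟩
    rintro _ ⟨x, rfl⟩
    exact ENNReal.toReal_le_of_le_ofReal zero_le_one (by simpa using prob_le_one)
  constructor
  · apply ciSup_le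
    rintro ⟨x, hx⟩
    have hxb : x ∈ Set.Ioo a b := ⟨hx.1, lt_trans hx.2 hx₀b⟩
    have hxsb : x + (b - a) / 2 ∈ Set.Ioo a b :=
      ⟨by linarith [hx.1, hax₀], by linarith [hx.2]⟩
    have hf := JumpAux.jumpProcess_measurable (σ := σ) (μ := μ) hab hxb t hB.meas hB.cont hB.start
    have hg := JumpAux.jumpProcess_measurable (σ := σ) (μ := μ) hab hxsb t hB.meas hB.cont hB.start
    set U : Set Ω := {ω | t < exitTime a ((a + b) / 2) σ μ x B ω} ∪ JumpAux.Nbad σ μ B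
      with hU
    have hDsub : {ω | jumpProcess a b σ μ x B t ω ≠
        jumpProcess a b σ μ (x + (b-a)/2) B t ω} ⊆ U := by
      intro ω hω
      by_contra hE
      rw [hU] at hE
      simp only [Set.mem_union, not_or, Set.mem_setOf_eq, not_lt] at hE
      exact hω (JumpAux.coupling hab (hB.cont ω) (hB.start ω) hE.2 hx hE.1)
    have key : ∀ A C : Set Ω, A ⊆ C ∪ U → (P A).toReal ≤ (P C).toReal +
        (P {ω | t < exitTime a ((a + b) / 2) σ μ x B ω}).toReal := by
      intro A C hAC
      have h1 : P A ≤ P C + P {ω | t < exitTime a ((a + b) / 2) σ μ x B ω} := by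
        calc P A ≤ P (C ∪ U) := measure_mono hAC
          _ ≤ P C + P U := measure_union_le _ _
          _ = P C + P {ω | t < exitTime a ((a + b) / 2) σ μ x B ω} := by
              rw [hU]
              congr 1
              refine le_antisymm (le_trans (measure_union_le _ _) ?_)
                (measure_mono Set.subset_union_left)
              rw [hNnull, add_zero]
      calc (P A).toReal ≤ (P C + P {ω | t < exitTime a ((a + b) / 2) σ μ x B ω}).toReal :=
            ENNReal.toReal_mono
              (ENNReal.add_ne_top.mpr ⟨measure_ne_top _ _, measure_ne_top _ _⟩) h1
        _ = _ := ENNReal.toReal_add (measure_ne_top _ _) (measure_ne_top _ _)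
    have hTV : tvDist (P.map (jumpProcess a b σ μ x B t))
        (P.map (jumpProcess a b σ μ (x + (b - a) / 2) B t)) ≤
        (P {ω | t < exitTime a ((a + b) / 2) σ μ x B ω}).toReal := by
      haveI : Nonempty {s : Set ℝ // MeasurableSet s} := ⟨⟨∅, MeasurableSet.empty⟩⟩
      apply ciSup_le
      intro s
      rw [Measure.map_apply hf s.2, Measure.map_apply hg s.2, abs_sub_le_iff]
      have hsub1 : jumpProcess a b σ μ x B t ⁻¹' s.1 ⊆
          jumpProcess a b σ μ (x + (b-a)/2) B t ⁻¹' s.1 ∪ U := by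
        intro ω hmem
        by_cases heq : jumpProcess a b σ μ x B t ω = jumpProcess a b σ μ (x + (b-a)/2) B t ω
        · left
          rw [Set.mem_preimage] at hmem ⊢
          rwa [← heq]
        · right
          exact hDsub heq
      have hsub2 : jumpProcess a b σ μ (x + (b-a)/2) B t ⁻¹' s.1 ⊆
          jumpProcess a b σ μ x B t ⁻¹' s.1 ∪ U := by
        intro ω hmem
        by_cases heq : jumpProcess a b σ μ x B t ω = jumpProcess a b σ μ (x + (b-a)/2) B t ω
        · left
          rw [Set.mem_preimage] at hmem ⊢
          rwa [heq]
        · right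
          exact hDsub heq
      have h1 := key _ _ hsub1
      have h2 := key _ _ hsub2
      constructor
      · linarith
      · linarith
    exact le_trans hTV (le_ciSup hbddR ⟨x, hx⟩)
  · apply ciSup_le
    rintro ⟨x, hx⟩
    exact tail x hx
end
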